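/- arXiv:2206.02012 — 9 statements merged into one kernel-verified Lean document; each statement's English description precedes it below -/
import Mathlib

section
/- For an iid sample (X_1,...,X_m) ~ μ^m and any k ∈ [m], the expected mass of the region covered only by the k-th ball satisfies E[μ(B(X_k,r) \ ∪_{i≠k} B(X_i,r))] ≤ 1/m. -/
open MeasureTheory Metric
open scoped ENNReal

section aux
variable {X : Type*} [MetricSpace X] [MeasurableSpace X] [BorelSpace X]
  (μ : Measure X) [IsProbabilityMeasure μ] {m : ℕ} (r : ℝ)

private def onlySet (r : ℝ) (j : Fin m) (x : Fin m → X) : Set X :=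
  closedBall (x j) r \ ⋃ i ∈ ({j}ᶜ : Set (Fin m)), closedBall (x i) r

private lemma onlySet_meas (j : Fin m) (x : Fin m → X) : MeasurableSet (onlySet r j x) :=
  (measurableSet_closedBall).diff
    (MeasurableSet.biUnion (Set.to_countable _) fun _ _ => measurableSet_closedBall)

omit [MeasurableSpace X] [BorelSpace X] in
private lemma onlySet_swap (j k : Fin m) (x : Fin m → X) :
    onlySet r k (fun i => x (Equiv.swap j k i)) = onlySet r j x := by
  set σ := Equiv.swap j k with hσ
  have hσk : σ k = j := Equiv.swap_apply_right j k
  unfold onlySet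
  simp only [hσk]
  congr 1
  ext y
  simp only [Set.mem_iUnion, Set.mem_compl_iff, Set.mem_singleton_iff, exists_prop]
  constructor
  · rintro ⟨i, hik, hy⟩
    exact ⟨σ i, fun h => hik (σ.injective (h.trans hσk.symm)), hy⟩
  · rintro ⟨i, hij, hy⟩
    refine ⟨σ i, fun h => hij ?_, by simpa [hσ, Equiv.swap_apply_self] using hy⟩
    have h2 : i = σ k := by
      have := congrArg σ h
      simpa [hσ, Equiv.swap_apply_self] using this
    rw [h2, hσk]

private lemma key (k : Fin m) :
    (∫⁻ x : Fin m → X, μ (onlySet r k x) ∂(Measure.pi fun _ => μ)) ≤ 1 / m := by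
  set P : Measure (Fin m → X) := Measure.pi fun _ => μ with hP
  have hm0 : (m : ℝ≥0∞) ≠ 0 := Nat.cast_ne_zero.2 k.pos.ne'
  set I : Fin m → ℝ≥0∞ := fun j => ∫⁻ x, μ (onlySet r j x) ∂P with hI
  -- symmetry: all I j equal
  have hsym : ∀ j, I j = I k := by
    intro j
    have hmp := measurePreserving_piCongrLeft (μ := fun _ : Fin m => μ)
      (α := fun _ : Fin m => X) (Equiv.swap j k)
    have hIk : I k = ∫⁻ x, μ (onlySet r k x) ∂((P.map
        (MeasurableEquiv.piCongrLeft (fun _ : Fin m => X) (Equiv.swap j k)))) := by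
      rw [hmp.map_eq]
    rw [hIk, lintegral_map_equiv]
    refine ((lintegral_congr fun x => ?_)).symm
    congr 1
    have he : ∀ i, (MeasurableEquiv.piCongrLeft (fun _ : Fin m => X)
        (Equiv.swap j k)) x i = x (Equiv.swap j k i) := fun i => by
      have h := MeasurableEquiv.piCongrLeft_apply_apply (β := fun _ : Fin m => X)
        (Equiv.swap j k) x (Equiv.swap j k i)
      simpa [Equiv.swap_apply_self] using h
    rw [show ((MeasurableEquiv.piCongrLeft (fun _ : Fin m => X) (Equiv.swap j k)) x)
        = fun i => x (Equiv.swap j k i) from funext he]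
    exact onlySet_swap r j k x
  -- superadditivity
  have hsum : ∀ (s : Finset (Fin m)),
      (∑ j ∈ s, I j) ≤ ∫⁻ x, ∑ j ∈ s, μ (onlySet r j x) ∂P := by
    intro s
    induction s using Finset.cons_induction with
    | empty => simp
    | cons a s ha ih =>
        simp only [Finset.sum_cons]
        exact le_trans (add_le_add le_rfl ih) (le_lintegral_add _ _)
  -- disjointness bound
  have hbound : ∀ x : Fin m → X, (∑ j : Fin m, μ (onlySet r j x)) ≤ 1 := by
    intro x
    have hd : ((Finset.univ : Finset (Fin m)) : Set (Fin m)).PairwiseDisjoint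
        fun j => onlySet r j x := by
      intro a _ b _ hab
      refine Set.disjoint_left.2 fun y hya hyb => ?_
      exact hya.2 (Set.mem_biUnion (by simpa using hab.symm) hyb.1)
    rw [← measure_biUnion_finset hd fun j _ => onlySet_meas r j x]
    calc μ _ ≤ μ Set.univ := measure_mono (Set.subset_univ _)
      _ = 1 := measure_univ
  have hmain : (m : ℝ≥0∞) * I k ≤ 1 := by
    have : (m : ℝ≥0∞) * I k = ∑ j : Fin m, I j := by
      simp [hsym, Finset.sum_const, nsmul_eq_mul]
    rw [this]
    refine le_trans (hsum Finset.univ) ?_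
    calc (∫⁻ x, ∑ j : Fin m, μ (onlySet r j x) ∂P)
        ≤ ∫⁻ _, 1 ∂P := lintegral_mono fun x => hbound x
      _ = 1 := by simp [hP]
  rw [ENNReal.le_div_iff_mul_le (Or.inl hm0) (Or.inl (ENNReal.natCast_ne_top m)),
    mul_comm]
  exact hmain
end aux

/-- For an iid sample of size `m`, the expected mass of the region covered only by
the `k`-th ball is at most `1/m`. -/
theorem stmt5 {X : Type*} [MetricSpace X] [MeasurableSpace X] [BorelSpace X]
    (μ : Measure X) [IsProbabilityMeasure μ]
    (m : ℕ) (r : ℝ) (k : Fin m) :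
    (∫ x : Fin m → X,
        (μ (closedBall (x k) r \ ⋃ i ∈ ({k}ᶜ : Set (Fin m)), closedBall (x i) r)).toReal
        ∂(Measure.pi fun _ => μ)) ≤ 1 / m := by
  set P : Measure (Fin m → X) := Measure.pi fun _ => μ with hP
  have hkey := key μ r k
  set g : (Fin m → X) → ℝ := fun x => (μ (onlySet r k x)).toReal with hg
  have hgoal : (∫ x, g x ∂P) ≤ 1 / m := by
    by_cases hInt : Integrable g P
    · have hnn : 0 ≤ᵐ[P] g := Filter.Eventually.of_forall fun x => ENNReal.toReal_nonneg
      rw [integral_eq_lintegral_of_nonneg_ae hnn hInt.1]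
      have heq : (∫⁻ x, ENNReal.ofReal (g x) ∂P) = ∫⁻ x, μ (onlySet r k x) ∂P := by
        refine lintegral_congr fun x => ?_
        exact ENNReal.ofReal_toReal (measure_ne_top μ _)
      rw [heq]
      have hne : (1 / m : ℝ≥0∞) ≠ ⊤ := by
        rcases Nat.eq_zero_or_pos m with h | h
        · exact absurd h k.pos.ne'
        · simp [ENNReal.div_eq_top, Nat.cast_ne_zero.2 h.ne']
      calc (∫⁻ x, μ (onlySet r k x) ∂P).toReal
          ≤ (1 / m : ℝ≥0∞).toReal := ENNReal.toReal_mono hne hkey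
        _ = 1 / m := by simp
    · rw [integral_undef hInt]
      positivity
  exact hgoal
end

section
/- Let R_1,...,R_n be [0,1]-valued random variables adapted to a filtration F_j, V = (1/n) ∑_j R_j and F = (1/n) ∑_j E[R_j | F_{j−1}]. Then E[exp((n/(4(e−2)))(F − 2V))] ≤ 1. -/
open MeasureTheory

/-- Pointwise exponential bound: for `0 < l ≤ 1/2` and `x ∈ [0,1]`,
`exp(-2lx) ≤ 1 - lx`. -/
lemma aux_expBound {l x : ℝ} (hl0 : 0 < l) (hl : l ≤ 1 / 2) (hx0 : 0 ≤ x) (hx1 : x ≤ 1) :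
    Real.exp (-(2 * l) * x) ≤ 1 - l * x := by
  have harg : -(2 * l) * x = x * (-(2 * l)) + (1 - x) * 0 := by ring
  have h1 : Real.exp (x * (-(2 * l)) + (1 - x) * 0) ≤
      x * Real.exp (-(2 * l)) + (1 - x) * Real.exp 0 :=
    convexOn_exp.2 (Set.mem_univ _) (Set.mem_univ _) hx0 (by linarith) (by ring)
  have hpos : (0 : ℝ) < 1 + 2 * l := by linarith
  have h2 : (1 : ℝ) + 2 * l ≤ Real.exp (2 * l) := by
    have := Real.add_one_le_exp (2 * l); linarith
  have h3 : Real.exp (-(2 * l)) ≤ (1 + 2 * l)⁻¹ := by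
    rw [Real.exp_neg]
    exact inv_anti₀ hpos h2
  have h4 : (1 + 2 * l)⁻¹ ≤ 1 - l := by
    rw [inv_eq_one_div, div_le_iff₀ hpos]; nlinarith
  have h5 : Real.exp (-(2 * l)) ≤ 1 - l := h3.trans h4
  rw [harg]
  rw [Real.exp_zero] at h1
  nlinarith [mul_le_mul_of_nonneg_left h5 hx0]

/-- Main supermartingale bound. -/
lemma aux_main {Ω : Type*} {mΩ : MeasurableSpace Ω} (P : Measure Ω) [IsProbabilityMeasure P]
    (F : Filtration ℕ mΩ) (R : ℕ → Ω → ℝ)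
    (hadp : StronglyAdapted F R) (hbd : ∀ j ω, R j ω ∈ Set.Icc (0 : ℝ) 1)
    {l : ℝ} (hl0 : 0 < l) (hl : l ≤ 1 / 2) (k : ℕ) :
    (∫ ω, Real.exp (∑ j ∈ Finset.Icc 1 k,
      (l * (P[R j|F (j - 1)]) ω - 2 * l * R j ω)) ∂P) ≤ 1 := by
  set μ : ℕ → Ω → ℝ := fun j => P[R j|F (j - 1)] with hμdef
  have hRsm : ∀ j, StronglyMeasurable (R j) := fun j => (hadp j).mono (F.le j)
  have hRint : ∀ j, Integrable (R j) P := by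
    intro j
    refine (integrable_const (1 : ℝ)).mono' (hRsm j).aestronglyMeasurable ?_
    filter_upwards with ω
    rw [Real.norm_of_nonneg (hbd j ω).1]
    exact (hbd j ω).2
  have hμsm : ∀ j, StronglyMeasurable (μ j) := fun j =>
    stronglyMeasurable_condExp.mono (F.le (j - 1))
  have hμ0 : ∀ j, 0 ≤ᵐ[P] μ j := fun j =>
    condExp_nonneg (ae_of_all _ fun ω => (hbd j ω).1)
  have hμ1 : ∀ j, μ j ≤ᵐ[P] fun _ => 1 := by
    intro j
    have h := condExp_mono (m := F (j - 1)) (hRint j) (integrable_const 1)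
      (ae_of_all _ fun ω => (hbd j ω).2)
    rwa [condExp_const (F.le (j - 1))] at h
  set G : ℕ → Ω → ℝ := fun m ω =>
    Real.exp (∑ j ∈ Finset.Icc 1 m, (l * μ j ω - 2 * l * R j ω)) with hGdef
  have hGsm : ∀ m, StronglyMeasurable (G m) := by
    intro m
    exact Real.continuous_exp.comp_stronglyMeasurable
      (Finset.stronglyMeasurable_fun_sum _ fun j _ =>
        ((hμsm j).const_mul l).sub ((hRsm j).const_mul (2 * l)))
  have hGbdd : ∀ m, ∀ᵐ ω ∂P, ‖G m ω‖ ≤ Real.exp (l * m) := by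
    intro m
    have h : ∀ᵐ ω ∂P, ∀ j ∈ Finset.Icc 1 m, l * μ j ω - 2 * l * R j ω ≤ l := by
      rw [Filter.eventually_all_finset]
      intro j _
      filter_upwards [hμ1 j] with ω h1
      have := (hbd j ω).1
      nlinarith
    filter_upwards [h] with ω hω
    rw [Real.norm_of_nonneg (Real.exp_pos _).le, Real.exp_le_exp]
    calc ∑ j ∈ Finset.Icc 1 m, (l * μ j ω - 2 * l * R j ω)
        ≤ ∑ j ∈ Finset.Icc 1 m, l := Finset.sum_le_sum hω
      _ = (m : ℝ) * l := by
          rw [Finset.sum_const, Nat.card_Icc]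
          simp [nsmul_eq_mul]
      _ = l * m := by ring
  have hGint : ∀ m, Integrable (G m) P := fun m =>
    (integrable_const _).mono' (hGsm m).aestronglyMeasurable (hGbdd m)
  induction k with
  | zero => simp [hGdef]
  | succ k ih =>
    -- split off the last term
    have hsplit : ∀ ω, G (k + 1) ω =
        (Real.exp (l * μ (k + 1) ω) * G k ω) * Real.exp (-(2 * l) * R (k + 1) ω) := by
      intro ω
      simp only [hGdef]
      have hins : Finset.Icc 1 (k + 1) = insert (k + 1) (Finset.Icc 1 k) :=
        (Finset.insert_Icc_right_eq_Icc_add_one (by omega)).symm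
      rw [hins, Finset.sum_insert (by simp), ← Real.exp_add, ← Real.exp_add]
      congr 1
      ring
    have hμksm : StronglyMeasurable[F k] (μ (k + 1)) := by
      have : k + 1 - 1 = k := rfl
      rw [hμdef]
      simpa [this] using (stronglyMeasurable_condExp :
        StronglyMeasurable[F (k + 1 - 1)] (P[R (k + 1)|F (k + 1 - 1)]))
    have hHsm : StronglyMeasurable[F k] (fun ω => Real.exp (l * μ (k + 1) ω) * G k ω) := by
      refine StronglyMeasurable.mul ?_ ?_
      · exact Real.continuous_exp.comp_stronglyMeasurable (hμksm.const_mul l)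
      · exact Real.continuous_exp.comp_stronglyMeasurable
          (Finset.stronglyMeasurable_fun_sum _ fun j hj => by
            have hj' : j ≤ k := (Finset.mem_Icc.mp hj).2
            exact (((stronglyMeasurable_condExp).mono (F.mono (by omega))).const_mul l).sub
              (((hadp j).mono (F.mono hj')).const_mul (2 * l)))
    set E : Ω → ℝ := fun ω => Real.exp (-(2 * l) * R (k + 1) ω) with hEdef
    have hEsm : StronglyMeasurable E :=
      Real.continuous_exp.comp_stronglyMeasurable ((hRsm (k + 1)).const_mul (-(2 * l)))
    have hEint : Integrable E P := by
      refine (integrable_const (1 : ℝ)).mono' hEsm.aestronglyMeasurable ?_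
      filter_upwards with ω
      rw [Real.norm_of_nonneg (Real.exp_pos _).le, Real.exp_le_one_iff]
      have h0 := (hbd (k + 1) ω).1
      nlinarith
    have hGkint : Integrable (fun ω => (Real.exp (l * μ (k + 1) ω) * G k ω) * E ω) P := by
      have : (fun ω => (Real.exp (l * μ (k + 1) ω) * G k ω) * E ω) = G (k + 1) := by
        funext ω; rw [hsplit ω]
      rw [this]; exact hGint (k + 1)
    -- pull-out property
    have hpull : P[fun ω => (Real.exp (l * μ (k + 1) ω) * G k ω) * E ω|F k] =ᵐ[P]
        (fun ω => Real.exp (l * μ (k + 1) ω) * G k ω) * P[E|F k] :=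
      condExp_mul_of_stronglyMeasurable_left hHsm hGkint hEint
    -- bound the conditional expectation of E
    have hlin : Integrable (fun ω => 1 - l * R (k + 1) ω) P :=
      (integrable_const 1).sub ((hRint (k + 1)).const_mul l)
    have hEle : P[E|F k] ≤ᵐ[P] P[fun ω => 1 - l * R (k + 1) ω|F k] := by
      refine condExp_mono hEint hlin (ae_of_all _ fun ω => ?_)
      exact aux_expBound hl0 hl (hbd (k + 1) ω).1 (hbd (k + 1) ω).2
    have hclin : P[fun ω => 1 - l * R (k + 1) ω|F k] =ᵐ[P]
        fun ω => 1 - l * μ (k + 1) ω := by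
      have h1 : (fun ω => 1 - l * R (k + 1) ω) =
          (fun _ => (1 : ℝ)) - l • R (k + 1) := by
        funext ω; simp [smul_eq_mul]
      rw [h1]
      have hsub := condExp_sub (m := F k) (μ := P) (integrable_const (1 : ℝ))
        ((hRint (k + 1)).smul l)
      refine hsub.trans ?_
      have hsmul := condExp_smul (m := F k) (μ := P) l (R (k + 1))
      have hc : P[fun _ : Ω => (1 : ℝ)|F k] = fun _ => (1 : ℝ) := condExp_const (F.le k) 1
      filter_upwards [hsmul] with ω hω
      have hω' : (P[l • R (k + 1)|F k]) ω = l * (P[R (k + 1)|F k]) ω := by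
        simpa [smul_eq_mul] using hω
      simp only [Pi.sub_apply, hc, hω']
      have : k + 1 - 1 = k := rfl
      rw [hμdef]
      simp [this]
    -- conditional expectation of G (k+1) is ≤ G k a.e.
    have hcond : P[G (k + 1)|F k] ≤ᵐ[P] G k := by
      have hGeq : G (k + 1) = fun ω => (Real.exp (l * μ (k + 1) ω) * G k ω) * E ω := by
        funext ω; rw [hsplit ω]
      rw [hGeq]
      filter_upwards [hpull, hEle, hclin, hμ0 (k + 1)] with ω h1 h2 h3 h4
      rw [h1]
      have hstep : (P[E|F k]) ω ≤ Real.exp (-(l * μ (k + 1) ω)) := by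
        refine le_trans (h2.trans_eq h3) ?_
        have := Real.add_one_le_exp (-(l * μ (k + 1) ω))
        linarith
      have hHnn : 0 ≤ Real.exp (l * μ (k + 1) ω) * G k ω :=
        mul_nonneg (Real.exp_pos _).le (Real.exp_pos _).le
      calc (Real.exp (l * μ (k + 1) ω) * G k ω) * (P[E|F k]) ω
          ≤ (Real.exp (l * μ (k + 1) ω) * G k ω) * Real.exp (-(l * μ (k + 1) ω)) :=
            mul_le_mul_of_nonneg_left hstep hHnn
        _ = G k ω := by
            rw [mul_comm (Real.exp (l * μ (k + 1) ω)) (G k ω), mul_assoc, ← Real.exp_add,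
              add_neg_cancel, Real.exp_zero, mul_one]
    -- conclude
    calc (∫ ω, G (k + 1) ω ∂P) = ∫ ω, (P[G (k + 1)|F k]) ω ∂P :=
          (integral_condExp (F.le k)).symm
      _ ≤ ∫ ω, G k ω ∂P :=
          integral_mono_ae integrable_condExp (hGint k) hcond
      _ ≤ 1 := ih

/-- Martingale lemma: for `[0,1]`-valued adapted variables `R_j`,
with `V = (1/n)∑ R_j` and `F = (1/n)∑ E[R_j | F_{j-1}]`,
`E[exp((n/(4(e-2)))(F - 2V))] ≤ 1`. -/
theorem stmt6 {Ω : Type*} {mΩ : MeasurableSpace Ω} (P : Measure Ω) [IsProbabilityMeasure P]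
    (F : Filtration ℕ mΩ) (n : ℕ) (R : ℕ → Ω → ℝ)
    (hadp : StronglyAdapted F R) (hbd : ∀ j ω, R j ω ∈ Set.Icc (0 : ℝ) 1) :
    (∫ ω, Real.exp (((n : ℝ) / (4 * (Real.exp 1 - 2))) *
        ((1 / n) * ∑ j ∈ Finset.Icc 1 n, (P[R j|F (j - 1)]) ω
          - 2 * ((1 / n) * ∑ j ∈ Finset.Icc 1 n, R j ω))) ∂P) ≤ 1 := by
  have he : (2.7 : ℝ) < Real.exp 1 := by
    have := Real.exp_one_gt_d9; norm_num at this ⊢; linarith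
  rcases Nat.eq_zero_or_pos n with hn | hn
  · subst hn
    simp
  · set l : ℝ := 1 / (4 * (Real.exp 1 - 2)) with hldef
    have hl0 : 0 < l := by
      rw [hldef]
      have h : (0:ℝ) < Real.exp 1 - 2 := by linarith
      positivity
    have hl : l ≤ 1 / 2 := by
      rw [hldef, div_le_div_iff₀ (by linarith) (by norm_num)]
      linarith
    have hnne : (n : ℝ) ≠ 0 := Nat.cast_ne_zero.mpr (by omega)
    have hexp : ∀ ω, ((n : ℝ) / (4 * (Real.exp 1 - 2))) *
        ((1 / n) * ∑ j ∈ Finset.Icc 1 n, (P[R j|F (j - 1)]) ω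
          - 2 * ((1 / n) * ∑ j ∈ Finset.Icc 1 n, R j ω)) =
        ∑ j ∈ Finset.Icc 1 n, (l * (P[R j|F (j - 1)]) ω - 2 * l * R j ω) := by
      intro ω
      rw [Finset.sum_sub_distrib, ← Finset.mul_sum, ← Finset.mul_sum, hldef]
      have hc : (1:ℝ) / (4 * (Real.exp 1 - 2)) =
          ((n:ℝ) / (4 * (Real.exp 1 - 2))) * (1 / n) := by
        field_simp
      rw [hc]
      ring
    simp_rw [hexp]
    exact aux_main P F R hadp hbd hl0 hl n
end

section
/- For 1 < r < √2, every ε ∈ (0,1) and n ≥ ln(4)/ε, there is D ∈ ℕ and a probability measure μ on ℝ^D such that for X ~ μ^n the variance of the conditional missing mass satisfies Var(M̂(X,r)) ≥ 1/4 − ε. -/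
open MeasureTheory Metric
open scoped ENNReal

set_option maxHeartbeats 1600000

private lemma stmt11_sum_aux {D : ℕ} (T : Finset (Fin D)) (nn : ℕ) (hT : (T.card : ℝ) ≤ nn)
    (f : Fin D → ℝ) (hf0 : ∀ j, 0 ≤ f j) (h1 : ∀ j ∉ T, f j = 1) :
    (D:ℝ) - nn ≤ ∑ j : Fin D, f j := by
  classical
  have hTn : T.card ≤ D := by
    have := Finset.card_le_card (Finset.subset_univ T)
    simpa using this
  have hmono : ∀ j ∈ Finset.univ, (if j ∉ T then (1:ℝ) else 0) ≤ f j := by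
    intro j _
    by_cases hj : j ∈ T
    · simp only [hj, not_true_eq_false, if_false]
      exact hf0 j
    · simp [hj, h1 j hj]
  calc (D:ℝ) - nn ≤ ((Finset.univ.filter (fun j : Fin D => j ∉ T)).card : ℝ) := by
        have hfc : Finset.univ.filter (fun j : Fin D => j ∉ T) = Finset.univ \ T := by
          ext j; simp [Finset.mem_sdiff]
        rw [hfc, Finset.card_sdiff_of_subset (Finset.subset_univ T)]
        rw [Nat.cast_sub (by simpa using hTn)]
        simp only [Finset.card_univ, Fintype.card_fin]
        linarith
  _ = ∑ j : Fin D, (if j ∉ T then (1:ℝ) else 0) := by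
        rw [Finset.sum_boole]
  _ ≤ _ := Finset.sum_le_sum hmono

private lemma stmt11_ind_nonneg {α : Type*} (A : Set α) (y : α) :
    0 ≤ A.indicator (fun _ => (1:ℝ)) y :=
  Set.indicator_nonneg (fun _ _ => by norm_num) _

private lemma stmt11_ind_le_one {α : Type*} (A : Set α) (y : α) :
    A.indicator (fun _ => (1:ℝ)) y ≤ 1 := by
  classical
  by_cases h : y ∈ A <;> simp [h]

/-- The explicit real-valued formula for the conditional missing mass. -/
private noncomputable def stmt11F (r p : ℝ) {DD N : ℕ} (e : Fin DD → EuclideanSpace ℝ (Fin DD))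
    (x : Fin N → EuclideanSpace ℝ (Fin DD)) : ℝ :=
  (p / DD) * ∑ j : Fin DD, (⋂ i, (closedBall (x i) r)ᶜ).indicator (fun _ => (1:ℝ)) (e j)
    + (1 - p) * (⋂ i, (closedBall (x i) r)ᶜ).indicator (fun _ => (1:ℝ)) 0

private lemma stmt11_C_mem (r : ℝ) {DD N : ℕ} (x : Fin N → EuclideanSpace ℝ (Fin DD))
    (y : EuclideanSpace ℝ (Fin DD)) :
    y ∈ (⋂ i, (closedBall (x i) r)ᶜ) ↔ ∀ i, r < dist y (x i) := by
  simp [Set.mem_iInter, mem_closedBall, not_le]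

private lemma stmt11F_nonneg {r p : ℝ} (hp0 : 0 < p) (hp1 : p < 1) {DD N : ℕ} (hDD : 0 < DD)
    (e : Fin DD → EuclideanSpace ℝ (Fin DD)) (x : Fin N → EuclideanSpace ℝ (Fin DD)) :
    0 ≤ stmt11F r p e x := by
  have hDR : (0:ℝ) < DD := by exact_mod_cast hDD
  apply add_nonneg
  · exact mul_nonneg (by positivity) (Finset.sum_nonneg fun j _ => stmt11_ind_nonneg _ _)
  · exact mul_nonneg (by linarith) (stmt11_ind_nonneg _ _)

private lemma stmt11F_le_one {r p : ℝ} (hp0 : 0 < p) (hp1 : p < 1) {DD N : ℕ} (hDD : 0 < DD)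
    (e : Fin DD → EuclideanSpace ℝ (Fin DD)) (x : Fin N → EuclideanSpace ℝ (Fin DD)) :
    stmt11F r p e x ≤ 1 := by
  have hDR : (0:ℝ) < DD := by exact_mod_cast hDD
  have h1 : ∑ j : Fin DD, (⋂ i, (closedBall (x i) r)ᶜ).indicator (fun _ => (1:ℝ)) (e j)
      ≤ DD := by
    calc ∑ j : Fin DD, (⋂ i, (closedBall (x i) r)ᶜ).indicator (fun _ => (1:ℝ)) (e j)
        ≤ ∑ _j : Fin DD, (1:ℝ) := Finset.sum_le_sum fun j _ => stmt11_ind_le_one _ _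
    _ = DD := by simp
  have h2 : (⋂ i, (closedBall (x i) r)ᶜ).indicator (fun _ => (1:ℝ)) 0 ≤ 1 :=
    stmt11_ind_le_one _ _
  have h3 : (p / DD) * ∑ j : Fin DD, (⋂ i, (closedBall (x i) r)ᶜ).indicator (fun _ => (1:ℝ)) (e j)
      ≤ (p / DD) * DD := mul_le_mul_of_nonneg_left h1 (by positivity)
  have h4 : (p / DD) * (DD:ℝ) = p := by field_simp
  have h5 : (1 - p) * (⋂ i, (closedBall (x i) r)ᶜ).indicator (fun _ => (1:ℝ)) 0 ≤ (1-p) := by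
    nlinarith [stmt11_ind_nonneg (⋂ i, (closedBall (x i) r)ᶜ)
      (0 : EuclideanSpace ℝ (Fin DD))]
  unfold stmt11F
  linarith

private lemma stmt11F_meas (r p : ℝ) {DD N : ℕ} (e : Fin DD → EuclideanSpace ℝ (Fin DD)) :
    Measurable (stmt11F r p e (N := N)) := by
  unfold stmt11F
  apply Measurable.add
  · apply Measurable.const_mul
    apply Finset.measurable_sum
    intro j _
    have hset : MeasurableSet {x : Fin N → EuclideanSpace ℝ (Fin DD) | ∀ i, r < dist (e j) (x i)} := by
      have h : {x : Fin N → EuclideanSpace ℝ (Fin DD) | ∀ i, r < dist (e j) (x i)}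
          = ⋂ i, {x : Fin N → EuclideanSpace ℝ (Fin DD) | r < dist (e j) (x i)} := by
        ext x; simp [Set.mem_iInter]
      rw [h]
      exact MeasurableSet.iInter fun i =>
        measurableSet_lt measurable_const (Measurable.dist measurable_const (measurable_pi_apply i))
    have heq : (fun x : Fin N → EuclideanSpace ℝ (Fin DD) =>
        (⋂ i, (closedBall (x i) r)ᶜ).indicator (fun _ => (1:ℝ)) (e j))
        = ({x : Fin N → EuclideanSpace ℝ (Fin DD) | ∀ i, r < dist (e j) (x i)}).indicator
          (fun _ => (1:ℝ)) := by
      funext x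
      by_cases h : ∀ i, r < dist (e j) (x i)
      · rw [Set.indicator_of_mem ((stmt11_C_mem r x (e j)).2 h),
          Set.indicator_of_mem (show x ∈ {x : Fin N → EuclideanSpace ℝ (Fin DD) | ∀ i, r < dist (e j) (x i)} from h)]
      · rw [Set.indicator_of_notMem (fun hh => h ((stmt11_C_mem r x (e j)).1 hh)),
          Set.indicator_of_notMem (show x ∉ {x : Fin N → EuclideanSpace ℝ (Fin DD) | ∀ i, r < dist (e j) (x i)} from h)]
    rw [heq]
    exact measurable_const.indicator hset
  · apply Measurable.const_mul
    have hset : MeasurableSet {x : Fin N → EuclideanSpace ℝ (Fin DD) |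
        ∀ i, r < dist (0 : EuclideanSpace ℝ (Fin DD)) (x i)} := by
      have h : {x : Fin N → EuclideanSpace ℝ (Fin DD) | ∀ i, r < dist (0 : EuclideanSpace ℝ (Fin DD)) (x i)}
          = ⋂ i, {x : Fin N → EuclideanSpace ℝ (Fin DD) | r < dist (0 : EuclideanSpace ℝ (Fin DD)) (x i)} := by
        ext x; simp [Set.mem_iInter]
      rw [h]
      exact MeasurableSet.iInter fun i =>
        measurableSet_lt measurable_const (Measurable.dist measurable_const (measurable_pi_apply i))
    have heq : (fun x : Fin N → EuclideanSpace ℝ (Fin DD) =>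
        (⋂ i, (closedBall (x i) r)ᶜ).indicator (fun _ => (1:ℝ)) (0 : EuclideanSpace ℝ (Fin DD)))
        = ({x : Fin N → EuclideanSpace ℝ (Fin DD) |
            ∀ i, r < dist (0 : EuclideanSpace ℝ (Fin DD)) (x i)}).indicator (fun _ => (1:ℝ)) := by
      funext x
      by_cases h : ∀ i, r < dist (0 : EuclideanSpace ℝ (Fin DD)) (x i)
      · rw [Set.indicator_of_mem ((stmt11_C_mem r x 0).2 h),
          Set.indicator_of_mem (show x ∈ {x : Fin N → EuclideanSpace ℝ (Fin DD) | ∀ i, r < dist (0 : EuclideanSpace ℝ (Fin DD)) (x i)} from h)]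
      · rw [Set.indicator_of_notMem (fun hh => h ((stmt11_C_mem r x 0).1 hh)),
          Set.indicator_of_notMem (show x ∉ {x : Fin N → EuclideanSpace ℝ (Fin DD) | ∀ i, r < dist (0 : EuclideanSpace ℝ (Fin DD)) (x i)} from h)]
    rw [heq]
    exact measurable_const.indicator hset

private lemma stmt11F_lower {r p : ℝ} (hp0 : 0 < p) {DD N : ℕ} (hDD : 0 < DD)
    (e : Fin DD → EuclideanSpace ℝ (Fin DD))
    (hdist : ∀ j k : Fin DD, j ≠ k → r < dist (e j) (e k))
    (x : Fin N → EuclideanSpace ℝ (Fin DD)) (hx : ∀ i, ∃ j, x i = e j) (hp1 : p < 1) :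
    p * ((DD:ℝ) - N) / DD ≤ stmt11F r p e x := by
  classical
  have hDR : (0:ℝ) < DD := by exact_mod_cast hDD
  choose σ hσ using hx
  have hTcard : ((Finset.image σ Finset.univ).card : ℝ) ≤ N := by
    have h := Finset.card_image_le (s := (Finset.univ : Finset (Fin N))) (f := σ)
    simp only [Finset.card_univ, Fintype.card_fin] at h
    exact_mod_cast h
  have hsum : (DD:ℝ) - N ≤ ∑ j : Fin DD,
      (⋂ i, (closedBall (x i) r)ᶜ).indicator (fun _ => (1:ℝ)) (e j) := by
    apply stmt11_sum_aux (Finset.image σ Finset.univ) N hTcard _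
      (fun j => stmt11_ind_nonneg _ _)
    intro j hj
    apply Set.indicator_of_mem
    rw [stmt11_C_mem]
    intro i
    rw [hσ i]
    exact hdist j (σ i) (fun h => hj (h ▸ Finset.mem_image_of_mem σ (Finset.mem_univ i)))
  have h2 : 0 ≤ (1 - p) * (⋂ i, (closedBall (x i) r)ᶜ).indicator (fun _ => (1:ℝ)) 0 :=
    mul_nonneg (by linarith) (stmt11_ind_nonneg _ _)
  calc p * ((DD:ℝ) - N) / DD = (p / DD) * ((DD:ℝ) - N) := by ring
  _ ≤ (p / DD) * ∑ j : Fin DD, (⋂ i, (closedBall (x i) r)ᶜ).indicator (fun _ => (1:ℝ)) (e j) :=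
      mul_le_mul_of_nonneg_left hsum (div_pos hp0 hDR).le
  _ ≤ stmt11F r p e x := by
      unfold stmt11F
      linarith

private lemma stmt11F_upper_mem {r p : ℝ} (hp0 : 0 < p) (hr1 : 1 < r) {DD N : ℕ} (hDD : 0 < DD)
    (hN : 0 < N) (e : Fin DD → EuclideanSpace ℝ (Fin DD))
    (hdist0 : ∀ j : Fin DD, dist (e j) 0 = 1)
    (x : Fin N → EuclideanSpace ℝ (Fin DD)) (hx : ∀ i, ∃ j, x i = e j) (hp1 : p < 1) :
    stmt11F r p e x ≤ p := by
  have hDR : (0:ℝ) < DD := by exact_mod_cast hDD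
  obtain ⟨j0, hj0⟩ := hx ⟨0, hN⟩
  have hcond0 : (0 : EuclideanSpace ℝ (Fin DD)) ∉ (⋂ i, (closedBall (x i) r)ᶜ) := by
    rw [stmt11_C_mem]
    push_neg
    exact ⟨⟨0, hN⟩, by rw [hj0, dist_comm, hdist0 j0]; linarith⟩
  have hzero : (⋂ i, (closedBall (x i) r)ᶜ).indicator (fun _ => (1:ℝ)) 0 = 0 :=
    Set.indicator_of_notMem hcond0 _
  have hsum : ∑ j : Fin DD, (⋂ i, (closedBall (x i) r)ᶜ).indicator (fun _ => (1:ℝ)) (e j)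
      ≤ DD := by
    calc ∑ j : Fin DD, (⋂ i, (closedBall (x i) r)ᶜ).indicator (fun _ => (1:ℝ)) (e j)
        ≤ ∑ _j : Fin DD, (1:ℝ) := Finset.sum_le_sum fun j _ => stmt11_ind_le_one _ _
    _ = DD := by simp
  have h3 : (p / DD) * ∑ j : Fin DD, (⋂ i, (closedBall (x i) r)ᶜ).indicator (fun _ => (1:ℝ)) (e j)
      ≤ (p / DD) * DD := mul_le_mul_of_nonneg_left hsum (div_pos hp0 hDR).le
  have h4 : (p / DD) * (DD:ℝ) = p := by field_simp
  unfold stmt11F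
  rw [hzero]
  linarith

private lemma stmt11F_upper_zero {r p : ℝ} (hr1 : 1 < r) {DD N : ℕ}
    (e : Fin DD → EuclideanSpace ℝ (Fin DD))
    (hdist0 : ∀ j : Fin DD, dist (e j) 0 = 1)
    (x : Fin N → EuclideanSpace ℝ (Fin DD)) (hi : ∃ i, x i = 0) :
    stmt11F r p e x = 0 := by
  obtain ⟨i1, hi1⟩ := hi
  have hball : ∀ y : EuclideanSpace ℝ (Fin DD), dist y (0 : EuclideanSpace ℝ (Fin DD)) ≤ r →
      y ∉ (⋂ i, (closedBall (x i) r)ᶜ) := by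
    intro y hy hmem
    rw [stmt11_C_mem] at hmem
    have h := hmem i1
    rw [hi1] at h
    linarith
  have hz1 : (⋂ i, (closedBall (x i) r)ᶜ).indicator (fun _ => (1:ℝ)) 0 = 0 :=
    Set.indicator_of_notMem (hball 0 (by simp; linarith)) _
  have hz2 : ∀ j : Fin DD, (⋂ i, (closedBall (x i) r)ᶜ).indicator (fun _ => (1:ℝ)) (e j) = 0 :=
    fun j => Set.indicator_of_notMem (hball (e j) (by rw [hdist0 j]; linarith)) _
  unfold stmt11F
  rw [hz1, Finset.sum_congr rfl (fun j _ => hz2 j)]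
  simp

private lemma stmt11_num1 {pp dd nn : ℝ} (hp : 0 < pp) (hd : 0 < dd) (h2 : 2*nn < dd) :
    pp/2 < pp*(dd - nn)/dd := by
  rw [lt_div_iff₀ hd]; nlinarith

private lemma stmt11_num2 (aa mm : ℝ) : (aa - mm)^2 * (1/2) + mm^2 * (1/2) ≥ aa^2/4 := by
  nlinarith [sq_nonneg (aa - 2*mm)]

private lemma stmt11_num3 {pp qq ee : ℝ} (hp2 : 1 - ee ≤ pp^2) (hq : 1 - ee/8 ≤ qq)
    (hq1 : qq ≤ 1) (he0 : 0 < ee) (he1 : ee < 1) : 1 - 4*ee ≤ (pp*qq)^2 := by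
  have hqpos : 0 ≤ 1 - ee/8 := by linarith
  have hqq : (1 - ee/8)^2 ≤ qq^2 := pow_le_pow_left₀ hqpos hq 2
  have hexp : (pp*qq)^2 = pp^2 * qq^2 := by ring
  rw [hexp]
  have h1 : 0 ≤ (pp^2 - (1-ee)) * qq^2 := mul_nonneg (by linarith) (sq_nonneg qq)
  have h2 : 0 ≤ (1-ee) * (qq^2 - (1-ee/8)^2) := mul_nonneg (by linarith) (by linarith)
  have h3 : ee^3 ≤ ee := by
    have h4 : 0 ≤ ee * ((1-ee) * (1+ee)) :=
      mul_nonneg he0.le (mul_nonneg (by linarith) (by linarith))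
    nlinarith [h4]
  nlinarith [h1, h2, h3, sq_nonneg ee]

/-- Negative result: for `1 < r < √2`, `ε ∈ (0,1)` and `n ≥ ln 4 / ε` there is a
dimension `D` and a probability measure `μ` on `ℝ^D` for which the variance of the
conditional missing mass is at least `1/4 - ε`. -/
theorem stmt11 (r ε : ℝ) (hr1 : 1 < r) (hr2 : r < Real.sqrt 2)
    (hε0 : 0 < ε) (hε1 : ε < 1) (n : ℕ) (hn : Real.log 4 / ε ≤ n) :
    ∃ (D : ℕ) (μ : Measure (EuclideanSpace ℝ (Fin D))), IsProbabilityMeasure μ ∧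
      (∫ x : Fin n → EuclideanSpace ℝ (Fin D),
          ((μ (⋂ i, (closedBall (x i) r)ᶜ)).toReal -
            ∫ y : Fin n → EuclideanSpace ℝ (Fin D),
              (μ (⋂ i, (closedBall (y i) r)ᶜ)).toReal ∂(Measure.pi fun _ => μ)) ^ 2
          ∂(Measure.pi fun _ => μ)) ≥ 1 / 4 - ε := by
  classical
  -- basic numeric facts
  have hlog4 : Real.log 4 = 2 * Real.log 2 := by
    rw [show (4:ℝ) = 2^2 by norm_num, Real.log_pow]; push_cast; ring
  have hlog2 : 0 < Real.log 2 := Real.log_pos (by norm_num)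
  have hn0 : 0 < n := by
    by_contra h
    push_neg at h
    interval_cases n
    have : 0 < Real.log 4 / ε := by positivity
    simp at hn; linarith
  have hnR : (0:ℝ) < n := by exact_mod_cast hn0
  set p : ℝ := Real.exp (-(Real.log 2) / n) with hp_def
  have hp0 : 0 < p := Real.exp_pos _
  have hp1 : p < 1 := by
    rw [hp_def, Real.exp_lt_one_iff]
    apply div_neg_of_neg_of_pos (by linarith) hnR
  have hpn : p ^ n = 1 / 2 := by
    rw [hp_def, ← Real.exp_nat_mul]
    rw [show (n:ℝ) * (-(Real.log 2)/n) = -Real.log 2 by field_simp]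
    rw [Real.exp_neg, Real.exp_log (by norm_num : (0:ℝ) < 2)]
    norm_num
  have hp2 : 1 - ε ≤ p ^ 2 := by
    have h1 : p ^ 2 = Real.exp (-(Real.log 4) / n) := by
      rw [hp_def, ← Real.exp_nat_mul]
      congr 1
      push_cast [hlog4]; field_simp
    have h3 : Real.log 4 / n ≤ ε := by
      rw [div_le_iff₀ hnR]
      have := (div_le_iff₀ hε0).mp hn
      linarith [mul_comm ε (n:ℝ)]
    have h4 : -(Real.log 4) / n = -(Real.log 4 / n) := by ring
    rw [h1]
    nlinarith [Real.add_one_le_exp (-(Real.log 4) / n), h4]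
  -- dimension
  set D : ℕ := 8 * n * ⌈ε⁻¹⌉₊ with hD_def
  have hceil : ε⁻¹ ≤ (⌈ε⁻¹⌉₊ : ℝ) := Nat.le_ceil _
  have hceil0 : 0 < ⌈ε⁻¹⌉₊ := by
    rw [Nat.ceil_pos]; positivity
  have hD0 : 0 < D := by positivity
  have hDR : (0:ℝ) < D := by exact_mod_cast hD0
  have hDn : (n:ℝ) / D ≤ ε / 8 := by
    rw [div_le_iff₀ hDR]
    have h8 : (D:ℝ) = 8 * n * ⌈ε⁻¹⌉₊ := by push_cast [hD_def]; ring
    rw [h8]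
    have : (1:ℝ) ≤ ε * ⌈ε⁻¹⌉₊ := by
      calc (1:ℝ) = ε * ε⁻¹ := by field_simp
      _ ≤ ε * ⌈ε⁻¹⌉₊ := by
          apply mul_le_mul_of_nonneg_left hceil hε0.le
    nlinarith
  have hD2n : 2 * (n:ℝ) < D := by
    have h8 : (D:ℝ) = 8 * n * ⌈ε⁻¹⌉₊ := by push_cast [hD_def]; ring
    have h1 : (1:ℝ) ≤ (⌈ε⁻¹⌉₊:ℝ) := by exact_mod_cast hceil0
    nlinarith
  clear_value p D
  -- the points
  set e : Fin D → (EuclideanSpace ℝ (Fin D)) := fun j => EuclideanSpace.single j (1:ℝ) with he_def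
  have hdist_ee : ∀ j k : Fin D, j ≠ k → dist (e j) (e k) = Real.sqrt 2 := by
    intro j k h
    rw [he_def]
    rw [EuclideanSpace.dist_eq]
    congr 1
    have hterm : ∀ i : Fin D, dist (EuclideanSpace.single j (1:ℝ) i) (EuclideanSpace.single k (1:ℝ) i) ^ 2
        = (if i = j then (1:ℝ) else 0) + (if i = k then (1:ℝ) else 0) := by
      intro i
      simp only [EuclideanSpace.single_apply, Real.dist_eq]
      by_cases h1 : i = j <;> by_cases h2 : i = k <;> simp_all
    rw [Finset.sum_congr rfl (fun i _ => hterm i), Finset.sum_add_distrib]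
    simp
    norm_num
  have hdist_e0 : ∀ j : Fin D, dist (e j) (0 : (EuclideanSpace ℝ (Fin D))) = 1 := by
    intro j
    rw [he_def, dist_zero_right, EuclideanSpace.norm_single]; norm_num
  have he_ne0 : ∀ j : Fin D, e j ≠ 0 := by
    intro j h
    have := hdist_e0 j
    rw [h] at this; simp at this
  -- the measure
  set μ : Measure (EuclideanSpace ℝ (Fin D)) :=
      (ENNReal.ofReal p / D) • (∑ j : Fin D, Measure.dirac (e j))
      + (ENNReal.ofReal (1 - p)) • Measure.dirac (0 : (EuclideanSpace ℝ (Fin D))) with hμ_def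
  have hind : ∀ (A : Set (EuclideanSpace ℝ (Fin D))) (y : (EuclideanSpace ℝ (Fin D))),
      A.indicator (1 : (EuclideanSpace ℝ (Fin D)) → ENNReal) y
      = ENNReal.ofReal (A.indicator (fun _ => (1:ℝ)) y) := by
    intro A y
    by_cases h : y ∈ A <;> simp [h]
  have hind_nonneg : ∀ (A : Set (EuclideanSpace ℝ (Fin D))) (y : (EuclideanSpace ℝ (Fin D))),
      0 ≤ A.indicator (fun _ => (1:ℝ)) y :=
    fun A y => Set.indicator_nonneg (fun _ _ => by norm_num) _
  have hind_le1 : ∀ (A : Set (EuclideanSpace ℝ (Fin D))) (y : (EuclideanSpace ℝ (Fin D))),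
      A.indicator (fun _ => (1:ℝ)) y ≤ 1 := by
    intro A y
    by_cases h : y ∈ A <;> simp [h]
  have hμ_apply : ∀ A : Set (EuclideanSpace ℝ (Fin D)), MeasurableSet A →
      μ A = ENNReal.ofReal ((p / D) * ∑ j : Fin D, A.indicator (fun _ => (1:ℝ)) (e j)
        + (1 - p) * A.indicator (fun _ => (1:ℝ)) 0) := by
    intro A hA
    rw [hμ_def]
    rw [Measure.add_apply, Measure.smul_apply, Measure.smul_apply,
      Measure.finset_sum_apply]
    simp only [Measure.dirac_apply' _ hA]
    rw [ENNReal.ofReal_add (mul_nonneg (by positivity) (Finset.sum_nonneg fun j _ =>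
        hind_nonneg A (e j)))
      (mul_nonneg (by linarith) (hind_nonneg A 0)),
      ENNReal.ofReal_mul (by positivity), ENNReal.ofReal_mul (by linarith),
      ENNReal.ofReal_sum_of_nonneg (fun j _ => hind_nonneg A (e j))]
    simp only [← hind]
    rw [ENNReal.ofReal_div_of_pos hDR, ENNReal.ofReal_natCast]
    rfl
  have hμ_univ : μ Set.univ = 1 := by
    rw [hμ_apply _ MeasurableSet.univ]
    simp [Finset.card_univ]
    field_simp
    ring
  have hprob : IsProbabilityMeasure μ := ⟨hμ_univ⟩
  refine ⟨D, μ, hprob, ?_⟩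
  haveI := hprob
  set ν : Measure (Fin n → (EuclideanSpace ℝ (Fin D))) := Measure.pi (fun _ => μ) with hν_def
  haveI : IsProbabilityMeasure ν := by
    rw [hν_def]; infer_instance
  -- the missing-mass set and its membership
  have hC_meas : ∀ x : Fin n → (EuclideanSpace ℝ (Fin D)),
      MeasurableSet (⋂ i, (closedBall (x i) r)ᶜ) :=
    fun x => MeasurableSet.iInter fun i => measurableSet_closedBall.compl
  have hC_mem : ∀ (x : Fin n → (EuclideanSpace ℝ (Fin D))) (y : (EuclideanSpace ℝ (Fin D))),
      y ∈ (⋂ i, (closedBall (x i) r)ᶜ) ↔ ∀ i, r < dist y (x i) := by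
    intro x y
    simp [Set.mem_iInter, mem_closedBall, not_le]
  -- real-valued formula for the missing mass
  set F : (Fin n → (EuclideanSpace ℝ (Fin D))) → ℝ := stmt11F r p e with hF_def
  have hF_nonneg : ∀ x, 0 ≤ F x := fun x => stmt11F_nonneg hp0 hp1 hD0 e x
  have hF_le_one : ∀ x, F x ≤ 1 := fun x => stmt11F_le_one hp0 hp1 hD0 e x
  have hF_meas : Measurable F := stmt11F_meas r p e
  have hMF : ∀ x : Fin n → (EuclideanSpace ℝ (Fin D)),
      (μ (⋂ i, (closedBall (x i) r)ᶜ)).toReal = F x := by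
    intro x
    rw [hμ_apply _ (hC_meas x)]
    rw [ENNReal.toReal_ofReal]
    · rfl
    · have h := stmt11F_nonneg (r := r) hp0 hp1 hD0 e x
      unfold stmt11F at h
      exact h
  -- the support sets
  set S : Set (EuclideanSpace ℝ (Fin D)) := Set.range e with hS_def
  have hS_meas : MeasurableSet S := (Set.finite_range e).measurableSet
  have hμS : μ S = ENNReal.ofReal p := by
    rw [hμ_apply _ hS_meas]
    have h1 : ∀ j : Fin D, S.indicator (fun _ => (1:ℝ)) (e j) = 1 := by
      intro j; rw [Set.indicator_of_mem (Set.mem_range_self j)]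
    have h2 : S.indicator (fun _ => (1:ℝ)) 0 = 0 := by
      apply Set.indicator_of_notMem
      rintro ⟨j, hj⟩
      exact he_ne0 j hj
    rw [h2, Finset.sum_congr rfl (fun j _ => h1 j)]
    simp
    congr 1
    field_simp
  have hμS0 : μ (S ∪ {0}) = 1 := by
    rw [hμ_apply _ (hS_meas.union (measurableSet_singleton 0))]
    have h1 : ∀ j : Fin D, (S ∪ {0}).indicator (fun _ => (1:ℝ)) (e j) = 1 := by
      intro j; rw [Set.indicator_of_mem (Set.mem_union_left _ (Set.mem_range_self j))]
    have hmem0 : (0:(EuclideanSpace ℝ (Fin D))) ∈ S ∪ {0} := Set.mem_union_right _ rfl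
    have h2 : (S ∪ {0}).indicator (fun _ => (1:ℝ)) 0 = 1 :=
      Set.indicator_of_mem hmem0 _
    rw [h2, Finset.sum_congr rfl (fun j _ => h1 j)]
    have : p / ↑D * ∑ _j : Fin D, (1:ℝ) + (1 - p) * 1 = 1 := by
      rw [Finset.sum_const, Finset.card_univ, Fintype.card_fin, nsmul_eq_mul, mul_one]
      field_simp
      ring
    rw [this, ENNReal.ofReal_one]
  -- the events
  set Event : Set (Fin n → (EuclideanSpace ℝ (Fin D))) := Set.pi Set.univ (fun _ => S) with hEvent_def
  have hEvent_meas : MeasurableSet Event := MeasurableSet.univ_pi fun _ => hS_meas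
  have hEvent_mem : ∀ x : Fin n → (EuclideanSpace ℝ (Fin D)), x ∈ Event ↔ ∀ i, ∃ j, x i = e j := by
    intro x
    rw [hEvent_def, Set.mem_univ_pi]
    constructor
    · intro h i; obtain ⟨j, hj⟩ := h i; exact ⟨j, hj.symm⟩
    · intro h i; obtain ⟨j, hj⟩ := h i; exact ⟨j, hj.symm⟩
  have hνEvent : ν Event = ENNReal.ofReal (1/2) := by
    rw [hEvent_def, hν_def, Measure.pi_pi]
    simp only [hμS, Finset.prod_const, Finset.card_univ, Fintype.card_fin]
    rw [← ENNReal.ofReal_pow hp0.le, hpn]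
  have hνEventc : ν Eventᶜ = ENNReal.ofReal (1/2) := by
    rw [prob_compl_eq_one_sub hEvent_meas, hνEvent]
    rw [← ENNReal.ofReal_one, ← ENNReal.ofReal_sub _ (by norm_num)]
    norm_num
  set Ω : Set (Fin n → (EuclideanSpace ℝ (Fin D))) := Set.pi Set.univ (fun _ => S ∪ {0}) with hΩ_def
  have hΩ_meas : MeasurableSet Ω :=
    MeasurableSet.univ_pi fun _ => hS_meas.union (measurableSet_singleton 0)
  have hΩ_mem : ∀ x : Fin n → (EuclideanSpace ℝ (Fin D)), x ∈ Ω → ∀ i, x i ∈ S ∪ {0} := by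
    intro x hx i
    exact hx i (Set.mem_univ i)
  have hνΩ : ν Ω = 1 := by
    rw [hΩ_def, hν_def, Measure.pi_pi]
    simp only [hμS0, Finset.prod_const, one_pow]
  have hae : ∀ᵐ x ∂ν, x ∈ Ω := by
    rw [ae_iff]
    have h : {x : Fin n → (EuclideanSpace ℝ (Fin D)) | ¬ x ∈ Ω} = Ωᶜ := rfl
    rw [h, prob_compl_eq_one_sub hΩ_meas, hνΩ]
    simp
  clear_value e μ ν F S Event Ω
  have hnD : (n:ℝ) ≤ D := by linarith
  set a : ℝ := p * ((D:ℝ) - n) / D with ha_def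
  have hr0 : 0 < r := by linarith
  -- lower bound on the event
  have h_lower : ∀ x ∈ Event, a ≤ F x := by
    intro x hx
    rw [hF_def, ha_def]
    exact stmt11F_lower hp0 hD0 e (fun j k hjk => by rw [hdist_ee j k hjk]; exact hr2)
      x ((hEvent_mem x).1 hx) hp1
  -- upper bound on Ω
  have h_upper : ∀ x ∈ Ω, F x ≤ Event.indicator (fun _ => p) x := by
    intro x hxΩ
    have hxΩ' : ∀ i, x i ∈ S ∪ {0} := hΩ_mem x hxΩ
    by_cases hx : x ∈ Event
    · rw [Set.indicator_of_mem hx, hF_def]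
      exact stmt11F_upper_mem hp0 hr1 hD0 hn0 e hdist_e0 x ((hEvent_mem x).1 hx) hp1
    · rw [Set.indicator_of_notMem hx]
      have hxi : ∃ i, x i = 0 := by
        by_contra h
        push_neg at h
        apply hx
        rw [hEvent_mem]
        intro i
        rcases hxΩ' i with hS' | h0
        · rw [hS_def] at hS'
          obtain ⟨j, hj⟩ := hS'
          exact ⟨j, hj.symm⟩
        · exact absurd h0 (h i)
      rw [hF_def]
      exact le_of_eq (stmt11F_upper_zero hr1 e hdist_e0 x hxi)
  -- integrability
  have hF_int : Integrable F ν := by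
    apply (integrable_const (1:ℝ)).mono' hF_meas.aestronglyMeasurable
    apply Filter.Eventually.of_forall
    intro x
    rw [Real.norm_eq_abs, abs_of_nonneg (hF_nonneg x)]
    exact hF_le_one x
  -- rewrite the goal in terms of F
  simp only [hMF]
  set m : ℝ := ∫ y, F y ∂ν with hm_def
  have hm_nonneg : 0 ≤ m := integral_nonneg hF_nonneg
  have hm_le : m ≤ p / 2 := by
    have hmono : m ≤ ∫ y, Event.indicator (fun _ => p) y ∂ν := by
      rw [hm_def]
      apply integral_mono_ae hF_int ((integrable_const p).indicator hEvent_meas)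
      filter_upwards [hae] with x hx using h_upper x hx
    rw [integral_indicator_const _ hEvent_meas, measureReal_def, hνEvent,
      ENNReal.toReal_ofReal (by norm_num), smul_eq_mul] at hmono
    linarith
  have hma : m < a := by
    have hpa : p / 2 < a := by
      rw [ha_def]
      exact stmt11_num1 hp0 hDR hD2n
    linarith
  -- the squared integrand bound
  set g : (Fin n → (EuclideanSpace ℝ (Fin D))) → ℝ := fun x =>
    Event.indicator (fun _ => (a - m)^2) x + Eventᶜ.indicator (fun _ => m^2) x with hg_def
  have hg_int : Integrable g ν :=
    ((integrable_const _).indicator hEvent_meas).add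
      ((integrable_const _).indicator hEvent_meas.compl)
  have hsq_int : Integrable (fun x => (F x - m)^2) ν := by
    apply (integrable_const ((1 + |m|)^2)).mono'
      (((hF_meas.sub measurable_const).pow measurable_const).aestronglyMeasurable)
    apply Filter.Eventually.of_forall
    intro x
    rw [Real.norm_eq_abs, abs_of_nonneg (sq_nonneg _)]
    have h1 : |F x - m| ≤ 1 + |m| := by
      have := abs_sub_abs_le_abs_sub (F x) m
      have h2 : |F x| ≤ 1 := abs_le.2 ⟨by linarith [hF_nonneg x], hF_le_one x⟩
      calc |F x - m| ≤ |F x| + |m| := abs_sub _ _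
      _ ≤ 1 + |m| := by linarith
    calc (F x - m)^2 = |F x - m|^2 := (sq_abs _).symm
    _ ≤ (1 + |m|)^2 := by
        apply pow_le_pow_left₀ (abs_nonneg _) h1
  have hg_le : ∀ᵐ x ∂ν, g x ≤ (F x - m)^2 := by
    filter_upwards [hae] with x hx
    by_cases hxE : x ∈ Event
    · have hgx : g x = (a - m)^2 := by
        rw [hg_def]
        simp only []
        rw [Set.indicator_of_mem hxE, Set.indicator_of_notMem (by simpa using hxE)]
        ring
      rw [hgx]
      have h1 : a ≤ F x := h_lower x hxE
      apply pow_le_pow_left₀ (by linarith) (by linarith)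
    · have hgx : g x = m^2 := by
        rw [hg_def]
        simp only []
        rw [Set.indicator_of_notMem hxE, Set.indicator_of_mem (by simpa using hxE)]
        ring
      have hFx : F x = 0 := by
        have h1 := h_upper x hx
        rw [Set.indicator_of_notMem hxE] at h1
        linarith [hF_nonneg x]
      rw [hgx, hFx]
      ring_nf
      exact le_refl _
  have hg_val : ∫ x, g x ∂ν = (a - m)^2 * (1/2) + m^2 * (1/2) := by
    rw [hg_def]
    simp only []
    rw [integral_add ((integrable_const _).indicator hEvent_meas)
      ((integrable_const _).indicator hEvent_meas.compl),
      integral_indicator_const _ hEvent_meas, integral_indicator_const _ hEvent_meas.compl,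
      measureReal_def, measureReal_def, hνEvent, hνEventc, ENNReal.toReal_ofReal (by norm_num), smul_eq_mul, smul_eq_mul]
    ring
  have hmain : ∫ x, (F x - m)^2 ∂ν ≥ (a - m)^2 * (1/2) + m^2 * (1/2) := by
    rw [← hg_val]
    exact integral_mono_ae hg_int hsq_int hg_le
  -- numeric conclusion
  have hq : 1 - ε/8 ≤ ((D:ℝ) - n)/D := by
    rw [sub_div, div_self (ne_of_gt hDR)]
    linarith
  have hq1 : ((D:ℝ) - n)/D ≤ 1 := by
    rw [sub_div, div_self (ne_of_gt hDR)]
    have : 0 ≤ (n:ℝ)/D := by positivity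
    linarith
  have ha2 : 1 - 4*ε ≤ a^2 := by
    have haeq : a = p * (((D:ℝ) - n)/D) := by rw [ha_def]; ring
    rw [haeq]
    exact stmt11_num3 hp2 hq hq1 hε0 hε1
  have hfinal : (a - m)^2 * (1/2) + m^2 * (1/2) ≥ 1/4 - ε := by
    have h6 := stmt11_num2 a m
    linarith
  linarith [hmain, hfinal]
end

section
/- For 1 < r < √2, every ε ∈ (0,1) and n ≥ ln(4)/ε, there exist D and two measures μ, μ' on ℝ^D such that for any measurable f : (ℝ^D)^n → ℝ there is μ'' ∈ {μ, μ'} with E_{X~(μ'')^n}[(f(X) − M(μ'',n,r))²] ≥ (1−ε)²/16, where M(ν,n,r) is the expected missing mass of ν. In particular no estimator of the expected missing mass has uniformly small L2 error. -/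
open MeasureTheory Metric Finset
open scoped NNReal ENNReal Classical

section aux

variable {α : Type*} [MeasurableSpace α] [MeasurableSingletonClass α]
  {ι : Type*} [Fintype ι]

/-- A finitely supported atomic measure. -/
noncomputable def atomM (w : ι → ℝ≥0) (p : ι → α) : Measure α :=
  ∑ k : ι, ((w k : ℝ≥0∞) • Measure.dirac (p k))

lemma atomM_apply (w : ι → ℝ≥0) (p : ι → α) (A : Set α) :
    atomM w p A = ∑ k : ι, if p k ∈ A then (w k : ℝ≥0∞) else 0 := by
  rw [atomM, Measure.finset_sum_apply]
  refine Finset.sum_congr rfl fun k _ => ?_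
  rw [Measure.smul_apply, Measure.dirac_apply, smul_eq_mul, Set.indicator_apply]
  split <;> simp

lemma atomM_isProb (w : ι → ℝ≥0) (p : ι → α) (hw : ∑ k, w k = 1) :
    IsProbabilityMeasure (atomM w p) := by
  constructor
  rw [atomM_apply]
  simp only [Set.mem_univ, if_true]
  rw [← ENNReal.coe_finset_sum, hw, ENNReal.coe_one]

lemma atomM_integrable (w : ι → ℝ≥0) (p : ι → α) (g : α → ℝ) :
    Integrable g (atomM w p) := by
  rw [atomM]
  refine integrable_finset_sum_measure.2 fun k _ => ?_
  refine Integrable.smul_measure ?_ ENNReal.coe_ne_top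
  exact (integrable_const (g (p k))).congr (ae_eq_dirac g).symm

lemma atomM_integral (w : ι → ℝ≥0) (p : ι → α) (g : α → ℝ) :
    ∫ x, g x ∂(atomM w p) = ∑ k, (w k : ℝ) * g (p k) := by
  rw [atomM, integral_finset_sum_measure (fun k _ =>
    ((integrable_const (g (p k))).congr (ae_eq_dirac g).symm).smul_measure ENNReal.coe_ne_top)]
  refine Finset.sum_congr rfl fun k _ => ?_
  rw [integral_smul_measure, integral_dirac, ENNReal.coe_toReal, smul_eq_mul]

lemma atomM_toReal_apply (w : ι → ℝ≥0) (p : ι → α) (A : Set α) :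
    (atomM w p A).toReal = ∑ k : ι, (w k : ℝ) * (if p k ∈ A then 1 else 0) := by
  rw [atomM_apply, ENNReal.toReal_sum (fun k _ => by split <;> simp)]
  refine Finset.sum_congr rfl fun k _ => ?_
  split <;> simp

lemma atomM_pi (n : ℕ) (w : ι → ℝ≥0) (p : ι → α) (hw : ∑ k, w k = 1) :
    Measure.pi (fun _ : Fin n => atomM w p)
      = atomM (fun t : Fin n → ι => ∏ i, w (t i)) (fun t i => p (t i)) := by
  haveI := atomM_isProb w p hw
  refine Measure.pi_eq fun s hs => ?_
  rw [atomM_apply]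
  have : ∀ i, atomM w p (s i) = ∑ k : ι, if p k ∈ s i then (w k : ℝ≥0∞) else 0 :=
    fun i => atomM_apply w p (s i)
  simp_rw [this]
  rw [Finset.prod_univ_sum, Fintype.piFinset_univ]
  refine Finset.sum_congr rfl fun t _ => ?_
  by_cases h : ∀ i, p (t i) ∈ s i
  · rw [if_pos (Set.mem_univ_pi.2 h)]
    rw [Finset.prod_congr rfl (fun i _ => if_pos (h i)), ENNReal.coe_finset_prod]
  · rw [if_neg (fun hc => h (Set.mem_univ_pi.1 hc))]
    obtain ⟨i, hi⟩ := not_forall.1 h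
    have : (if p (t i) ∈ s i then ((w (t i) : ℝ≥0∞)) else 0) = 0 := if_neg hi
    exact (Finset.prod_eq_zero (Finset.mem_univ i) this).symm

/-- Sum over all tuples of a product equals power of the sum. -/
lemma sum_prod_pow (n : ℕ) (c : ι → ℝ) :
    ∑ t : Fin n → ι, ∏ i, c (t i) = (∑ k, c k) ^ n := by
  have := (Finset.prod_univ_sum (fun _ : Fin n => (Finset.univ : Finset ι))
    (fun _ k => c k)).symm
  rw [Fintype.piFinset_univ] at this
  rw [this, Finset.prod_const, Finset.card_univ, Fintype.card_fin]

/-- Finite-sum Jensen / Cauchy–Schwarz: `(∑ W g - c)² ≤ ∑ W (g - c)²` for weights summing to 1. -/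
lemma sum_sq_jensen (W g : ι → ℝ) (hW : ∀ t, 0 ≤ W t) (h1 : ∑ t, W t = 1) (c : ℝ) :
    (∑ t, W t * g t - c) ^ 2 ≤ ∑ t, W t * (g t - c) ^ 2 := by
  have CS := Finset.sum_mul_sq_le_sq_mul_sq Finset.univ (fun t => Real.sqrt (W t))
    (fun t => Real.sqrt (W t) * (g t - c))
  have e1 : ∀ t : ι, Real.sqrt (W t) * (Real.sqrt (W t) * (g t - c)) = W t * (g t - c) := by
    intro t; rw [← mul_assoc, Real.mul_self_sqrt (hW t)]
  have e2 : ∀ t : ι, Real.sqrt (W t) ^ 2 = W t := fun t => Real.sq_sqrt (hW t)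
  have e3 : ∀ t : ι, (Real.sqrt (W t) * (g t - c)) ^ 2 = W t * (g t - c) ^ 2 := by
    intro t; rw [mul_pow, e2]
  rw [Finset.sum_congr rfl (fun t _ => e1 t), Finset.sum_congr rfl (fun t _ => e2 t),
    Finset.sum_congr rfl (fun t _ => e3 t), h1, one_mul] at CS
  have e4 : ∑ t, W t * (g t - c) = ∑ t, W t * g t - c := by
    simp_rw [mul_sub, Finset.sum_sub_distrib, ← Finset.sum_mul, h1, one_mul]
  rwa [e4] at CS

end aux

lemma atomM_missing {α : Type*} [MeasurableSpace α] [MeasurableSingletonClass α]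
    [PseudoMetricSpace α] {ι κ : Type*} [Fintype ι] [Fintype κ]
    (n : ℕ) (r : ℝ) (w : ι → ℝ≥0) (p : ι → α) (hw : ∑ k, w k = 1)
    (v : κ → ℝ≥0) (x : κ → α) :
    ∫ y : Fin n → α, ((atomM v x) (⋂ i, (closedBall (y i) r)ᶜ)).toReal
        ∂(Measure.pi fun _ => atomM w p)
      = ∑ mm, (v mm : ℝ) * (∑ k, if r < dist (x mm) (p k) then (w k : ℝ) else 0) ^ n := by
  rw [atomM_pi n w p hw, atomM_integral]
  have hmem : ∀ (mm : κ) (y : Fin n → α),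
      (x mm ∈ ⋂ i, (closedBall (y i) r)ᶜ) ↔ ∀ i, r < dist (x mm) (y i) := by
    intro mm y; simp [Set.mem_iInter, mem_closedBall, not_le]
  calc ∑ t : Fin n → ι, ((∏ i, w (t i) : ℝ≥0) : ℝ) *
        ((atomM v x) (⋂ i, (closedBall (p (t i)) r)ᶜ)).toReal
      = ∑ t : Fin n → ι, ∑ mm, (v mm : ℝ) *
          ∏ i, (if r < dist (x mm) (p (t i)) then (w (t i) : ℝ) else 0) := by
        refine Finset.sum_congr rfl fun t _ => ?_
        rw [atomM_toReal_apply, Finset.mul_sum]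
        refine Finset.sum_congr rfl fun mm _ => ?_
        rw [if_congr (hmem mm _) rfl rfl]
        by_cases hc : ∀ i, r < dist (x mm) (p (t i))
        · rw [if_pos hc, Finset.prod_congr rfl (fun i (_ : i ∈ Finset.univ) => if_pos (hc i))]
          push_cast
          ring
        · rw [if_neg hc]
          obtain ⟨i, hi⟩ := not_forall.1 hc
          rw [Finset.prod_eq_zero (f := fun i => if r < dist (x mm) (p (t i)) then ((w (t i) : ℝ)) else 0)
            (Finset.mem_univ i) (if_neg hi)]
          ring
    _ = ∑ mm, (v mm : ℝ) * ∑ t : Fin n → ι,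
          ∏ i, (if r < dist (x mm) (p (t i)) then (w (t i) : ℝ) else 0) := by
        rw [Finset.sum_comm]
        exact Finset.sum_congr rfl fun mm _ => (Finset.mul_sum _ _ _).symm
    _ = ∑ mm, (v mm : ℝ) * (∑ k, if r < dist (x mm) (p k) then (w k : ℝ) else 0) ^ n := by
        refine Finset.sum_congr rfl fun mm _ => ?_
        rw [sum_prod_pow n (fun k => if r < dist (x mm) (p k) then (w k : ℝ) else 0)]

set_option maxHeartbeats 1000000

/-- No estimator of the expected missing mass has uniformly small L2 error:
for `1 < r < √2`, `ε ∈ (0,1)` and `n ≥ ln 4 / ε` there exist a dimension `D` and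
probability measures `μ, μ'` on `ℝ^D` such that for every measurable estimator `f`
some `ν ∈ {μ, μ'}` yields `E[(f(X) - M(ν,n,r))²] ≥ (1-ε)²/16`. -/
theorem stmt12 (r ε : ℝ) (hr1 : 1 < r) (hr2 : r < Real.sqrt 2)
    (hε0 : 0 < ε) (hε1 : ε < 1) (n : ℕ) (hn : Real.log 4 / ε ≤ n) :
    ∃ (D : ℕ) (μ μ' : Measure (EuclideanSpace ℝ (Fin D))),
      IsProbabilityMeasure μ ∧ IsProbabilityMeasure μ' ∧
      ∀ f : (Fin n → EuclideanSpace ℝ (Fin D)) → ℝ, Measurable f →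
        ∃ ν : Measure (EuclideanSpace ℝ (Fin D)), (ν = μ ∨ ν = μ') ∧
          (∫ x : Fin n → EuclideanSpace ℝ (Fin D),
              (f x - ∫ y : Fin n → EuclideanSpace ℝ (Fin D),
                  (ν (⋂ i, (closedBall (y i) r)ᶜ)).toReal ∂(Measure.pi fun _ => ν)) ^ 2
              ∂(Measure.pi fun _ => ν)) ≥ (1 - ε) ^ 2 / 16 := by
  classical
  have hr0 : (0:ℝ) < r := lt_trans one_pos hr1
  have hlog : 0 < Real.log 4 := Real.log_pos (by norm_num)
  have hnpos : 0 < (n:ℝ) := lt_of_lt_of_le (div_pos hlog hε0) hn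
  have hn0 : n ≠ 0 := by exact_mod_cast hnpos.ne'
  -- dimension
  obtain ⟨D, hD0, hne⟩ : ∃ D : ℕ, 0 < D ∧ (n:ℝ) * (D:ℝ)⁻¹ ≤ ε := by
    refine ⟨⌈(n:ℝ)/ε⌉₊ + 1, Nat.succ_pos _, ?_⟩
    have h1 := Nat.le_ceil ((n:ℝ)/ε)
    have h2 : ((⌈(n:ℝ)/ε⌉₊ : ℝ)) ≤ ((⌈(n:ℝ)/ε⌉₊ + 1 : ℕ) : ℝ) := by push_cast; linarith
    have hDR : (0:ℝ) < ((⌈(n:ℝ)/ε⌉₊ + 1 : ℕ) : ℝ) := by positivity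
    have hDge : (n:ℝ)/ε ≤ ((⌈(n:ℝ)/ε⌉₊ + 1 : ℕ) : ℝ) := le_trans h1 h2
    rw [div_le_iff₀ hε0] at hDge
    rw [mul_inv_le_iff₀ hDR]
    nlinarith
  have hDR : (0:ℝ) < D := by exact_mod_cast hD0
  have hDR1 : (1:ℝ) ≤ D := by exact_mod_cast hD0
  have hinv1 : (D:ℝ)⁻¹ ≤ 1 := by
    rw [inv_le_one_iff₀]; right; exact hDR1
  have hinv0 : (0:ℝ) < (D:ℝ)⁻¹ := by positivity
  set m : ℝ := (1 - (D:ℝ)⁻¹)^n with hmdef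
  have hm0 : (0:ℝ) ≤ 1 - (D:ℝ)⁻¹ := by linarith
  have hmnn : 0 ≤ m := pow_nonneg hm0 n
  have hm1 : 1 - ε ≤ m := by
    calc (1:ℝ) - ε ≤ 1 + (n:ℝ) * (-(D:ℝ)⁻¹) := by nlinarith
      _ ≤ (1 + (-(D:ℝ)⁻¹))^n := one_add_mul_le_pow (by linarith) n
      _ = m := by rw [hmdef]; ring_nf
  -- the mixture weight
  set q : ℝ≥0 := (4:ℝ≥0)⁻¹ ^ ((n:ℝ)⁻¹) with hqdef
  have hq1 : q ≤ 1 := NNReal.rpow_le_one (inv_le_one_of_one_le₀ (by norm_num)) (by positivity)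
  have hqR1 : (q:ℝ) ≤ 1 := by exact_mod_cast hq1
  have hqR0 : (0:ℝ) ≤ (q:ℝ) := q.coe_nonneg
  have hqn : (q:ℝ)^n = 4⁻¹ := by
    have hq : q ^ (n:ℕ) = (4:ℝ≥0)⁻¹ := by
      rw [hqdef, ← NNReal.rpow_natCast ((4:ℝ≥0)⁻¹ ^ ((n:ℝ)⁻¹)) n, ← NNReal.rpow_mul,
        inv_mul_cancel₀ (by exact_mod_cast hn0 : (n:ℝ) ≠ 0), NNReal.rpow_one]
    calc (q:ℝ)^n = ((q ^ n : ℝ≥0) : ℝ) := by push_cast; ring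
      _ = 4⁻¹ := by rw [hq]; push_cast; ring
  -- the two measures
  set e : Fin D → EuclideanSpace ℝ (Fin D) := fun j => EuclideanSpace.single j (1:ℝ) with hedef
  set w' : Fin D → ℝ≥0 := fun _ => (D:ℝ≥0)⁻¹ with hw'def
  set wμ : Option (Fin D) → ℝ≥0 :=
    fun o => Option.elim o (1 - q) (fun _ => q * (D:ℝ≥0)⁻¹) with hwμdef
  set pμ : Option (Fin D) → EuclideanSpace ℝ (Fin D) :=
    fun o => Option.elim o 0 e with hpμdef
  have hDnn : (D:ℝ≥0) ≠ 0 := Nat.cast_ne_zero.2 hD0.ne'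
  have hsum' : ∑ k, w' k = 1 := by
    rw [hw'def, Finset.sum_const, Finset.card_univ, Fintype.card_fin, nsmul_eq_mul,
      mul_inv_cancel₀ hDnn]
  have hsumμ : ∑ k, wμ k = 1 := by
    rw [Fintype.sum_option]
    simp only [hwμdef, Option.elim]
    rw [Finset.sum_const, Finset.card_univ, Fintype.card_fin, nsmul_eq_mul,
      mul_comm q ((D:ℝ≥0)⁻¹), ← mul_assoc, mul_inv_cancel₀ hDnn, one_mul,
      tsub_add_cancel_of_le hq1]
  haveI hP' : IsProbabilityMeasure (atomM w' e) := atomM_isProb _ _ hsum'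
  haveI hPμ : IsProbabilityMeasure (atomM wμ pμ) := atomM_isProb _ _ hsumμ
  refine ⟨D, atomM wμ pμ, atomM w' e, hPμ, hP', ?_⟩
  intro f hf
  by_contra hcon
  push_neg at hcon
  have h1 := hcon (atomM wμ pμ) (Or.inl rfl)
  have h2 := hcon (atomM w' e) (Or.inr rfl)
  -- distance facts
  have hd0e : ∀ j : Fin D, dist (0 : EuclideanSpace ℝ (Fin D)) (e j) = 1 := by
    intro j
    rw [dist_zero_left, hedef, EuclideanSpace.norm_single, norm_one]
  have hdee : ∀ j k : Fin D, (r < dist (e j) (e k)) ↔ k ≠ j := by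
    intro j k
    constructor
    · rintro h rfl
      rw [dist_self] at h; linarith
    · intro hk
      have hinner : (inner ℝ (e j) (e k) : ℝ) = 0 := by
        rw [hedef]
        simp only [EuclideanSpace.inner_single_left, EuclideanSpace.single_apply, map_one,
          one_mul]
        rw [if_neg (Ne.symm hk)]
      have hnj : ‖e j‖ = 1 := by rw [hedef, EuclideanSpace.norm_single, norm_one]
      have hnk : ‖e k‖ = 1 := by rw [hedef, EuclideanSpace.norm_single, norm_one]
      have h2 : dist (e j) (e k) ^ 2 = 2 := by
        rw [dist_eq_norm, norm_sub_sq_real, hinner, hnj, hnk]; ring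
      have hds : dist (e j) (e k) = Real.sqrt 2 := by
        rw [← Real.sqrt_sq dist_nonneg, h2]
      rw [hds]; exact hr2
  have hde0 : ∀ j : Fin D, dist (e j) (0 : EuclideanSpace ℝ (Fin D)) = 1 := fun j => by
    rw [dist_comm]; exact hd0e j
  -- a basic counting sum
  have hsum_e : ∀ (j : Fin D) (c : ℝ), 0 ≤ c →
      (∑ k, if r < dist (e j) (e k) then c else 0) = (1 - (D:ℝ)⁻¹) * (c * D) := by
    intro j c hc
    have hterm : ∀ k : Fin D, (if r < dist (e j) (e k) then c else 0)
        = c - (if k = j then c else 0) := by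
      intro k
      rcases eq_or_ne k j with rfl | hk
      · rw [if_neg (by rw [dist_self]; linarith), if_pos rfl]; ring
      · rw [if_pos ((hdee j k).2 hk), if_neg hk]; ring
    rw [Finset.sum_congr rfl (fun k _ => hterm k), Finset.sum_sub_distrib,
      Finset.sum_const, Finset.card_univ, Fintype.card_fin,
      Finset.sum_ite_eq' Finset.univ j (fun _ => c), if_pos (Finset.mem_univ j),
      nsmul_eq_mul]
    field_simp
  -- expected missing masses
  have hM' : (∫ y : Fin n → EuclideanSpace ℝ (Fin D),
      ((atomM w' e) (⋂ i, (closedBall (y i) r)ᶜ)).toReal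
        ∂(Measure.pi fun _ => atomM w' e)) = m := by
    rw [atomM_missing n r w' e hsum' w' e]
    have hcoe : ∀ k : Fin D, ((w' k : ℝ)) = (D:ℝ)⁻¹ := fun k => by
      rw [hw'def]; push_cast; ring
    have hstep : ∀ j : Fin D,
        ((w' j : ℝ)) * (∑ k, if r < dist (e j) (e k) then ((w' k : ℝ)) else 0) ^ n
          = (D:ℝ)⁻¹ * m := by
      intro j
      have hsum1 : (∑ k, if r < dist (e j) (e k) then ((w' k : ℝ)) else 0)
          = 1 - (D:ℝ)⁻¹ := by
        calc (∑ k, if r < dist (e j) (e k) then ((w' k : ℝ)) else 0)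
            = (∑ k, if r < dist (e j) (e k) then (D:ℝ)⁻¹ else 0) :=
              Finset.sum_congr rfl (fun k _ => by rw [hcoe k])
          _ = (1 - (D:ℝ)⁻¹) * ((D:ℝ)⁻¹ * D) := hsum_e j _ hinv0.le
          _ = 1 - (D:ℝ)⁻¹ := by rw [inv_mul_cancel₀ hDR.ne', mul_one]
      rw [hsum1, hcoe j, ← hmdef]
    rw [Finset.sum_congr rfl (fun j _ => hstep j), Finset.sum_const, Finset.card_univ,
      Fintype.card_fin, nsmul_eq_mul, ← mul_assoc, mul_inv_cancel₀ hDR.ne', one_mul]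
  have hMμ : (∫ y : Fin n → EuclideanSpace ℝ (Fin D),
      ((atomM wμ pμ) (⋂ i, (closedBall (y i) r)ᶜ)).toReal
        ∂(Measure.pi fun _ => atomM wμ pμ)) = (q:ℝ) * 4⁻¹ * m := by
    rw [atomM_missing n r wμ pμ hsumμ wμ pμ, Fintype.sum_option]
    have hzero : ∀ k : Option (Fin D),
        (if r < dist (pμ none) (pμ k) then ((wμ k : ℝ)) else 0) = 0 := by
      intro k
      refine if_neg (not_lt.2 ?_)
      rcases k with _ | j
      · have h0 : pμ none = (0 : EuclideanSpace ℝ (Fin D)) := rfl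
        rw [h0, dist_self]; linarith
      · have h0 : pμ none = (0 : EuclideanSpace ℝ (Fin D)) := rfl
        have hj : pμ (some j) = e j := rfl
        rw [h0, hj, hd0e j]; linarith
    have hnone : ((wμ none : ℝ)) *
        (∑ k, if r < dist (pμ none) (pμ k) then ((wμ k : ℝ)) else 0) ^ n = 0 := by
      rw [Finset.sum_congr rfl (fun k _ => hzero k), Finset.sum_const, smul_zero,
        zero_pow hn0, mul_zero]
    rw [hnone, zero_add]
    have hsome : ∀ j : Fin D,
        ((wμ (some j) : ℝ)) *
            (∑ k, if r < dist (pμ (some j)) (pμ k) then ((wμ k : ℝ)) else 0) ^ n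
          = ((q:ℝ) * (D:ℝ)⁻¹) * ((q:ℝ) * (1 - (D:ℝ)⁻¹)) ^ n := by
      intro j
      have hwj : ((wμ (some j) : ℝ)) = (q:ℝ) * (D:ℝ)⁻¹ := by
        rw [show wμ (some j) = q * (D:ℝ≥0)⁻¹ from rfl]; push_cast; ring
      have hinner : (∑ k : Option (Fin D),
          if r < dist (pμ (some j)) (pμ k) then ((wμ k : ℝ)) else 0)
          = (q:ℝ) * (1 - (D:ℝ)⁻¹) := by
        rw [Fintype.sum_option]
        have h0 : (if r < dist (pμ (some j)) (pμ none) then ((wμ none : ℝ)) else 0) = 0 := by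
          refine if_neg (not_lt.2 ?_)
          rw [show dist (pμ (some j)) (pμ none) = 1 from hde0 j]; linarith
        have hterm : ∀ k : Fin D,
            (if r < dist (pμ (some j)) (pμ (some k)) then ((wμ (some k) : ℝ)) else 0)
              = (if r < dist (e j) (e k) then (q:ℝ) * (D:ℝ)⁻¹ else 0) := by
          intro k
          have h1 : dist (pμ (some j)) (pμ (some k)) = dist (e j) (e k) := rfl
          have h2 : ((wμ (some k) : ℝ)) = (q:ℝ) * (D:ℝ)⁻¹ := by
            rw [show wμ (some k) = q * (D:ℝ≥0)⁻¹ from rfl]; push_cast; ring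
          rw [h1, h2]
        rw [h0, zero_add, Finset.sum_congr rfl (fun k _ => hterm k),
          hsum_e j _ (by positivity)]
        field_simp
      rw [hwj, hinner]
    rw [Finset.sum_congr rfl (fun j _ => hsome j), Finset.sum_const, Finset.card_univ,
      Fintype.card_fin, nsmul_eq_mul, mul_pow, hqn, ← hmdef]
    field_simp
  set Mμ : ℝ := (q:ℝ) * 4⁻¹ * m with hMμdef
  -- integral formulas
  have hE' : ∀ c : ℝ, (∫ x, (f x - c)^2 ∂(Measure.pi fun _ => atomM w' e))
      = ∑ t : Fin n → Fin D, ((D:ℝ)⁻¹)^n * (f (fun i => e (t i)) - c)^2 := by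
    intro c
    rw [atomM_pi n w' e hsum', atomM_integral]
    refine Finset.sum_congr rfl fun t _ => ?_
    congr 1
    rw [hw'def]
    push_cast
    rw [Finset.prod_const, Finset.card_univ, Fintype.card_fin]
  have hEμ : ∀ c : ℝ, (∫ x, (f x - c)^2 ∂(Measure.pi fun _ => atomM wμ pμ))
      = ∑ t : Fin n → Option (Fin D),
          ((∏ i, wμ (t i) : ℝ≥0) : ℝ) * (f (fun i => pμ (t i)) - c)^2 := by
    intro c
    rw [atomM_pi n wμ pμ hsumμ, atomM_integral]
  -- coupling bound
  have hcoup : ∀ c : ℝ, ∑ t : Fin n → Fin D, ((D:ℝ)⁻¹)^n * (f (fun i => e (t i)) - c)^2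
      ≤ 4 * ∫ x, (f x - c)^2 ∂(Measure.pi fun _ => atomM wμ pμ) := by
    intro c
    rw [hEμ c]
    have hinj : Function.Injective
        (fun (t : Fin n → Fin D) => (fun i => some (t i) : Fin n → Option (Fin D))) := by
      intro a b hab
      funext i
      exact Option.some_injective _ (congrFun hab i)
    have himg : ∑ t : Fin n → Fin D,
        ((∏ i, wμ (some (t i)) : ℝ≥0) : ℝ) * (f (fun i => pμ (some (t i))) - c)^2
        ≤ ∑ u : Fin n → Option (Fin D),
            ((∏ i, wμ (u i) : ℝ≥0) : ℝ) * (f (fun i => pμ (u i)) - c)^2 := by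
      have himgeq := Finset.sum_image
        (f := fun u : Fin n → Option (Fin D) =>
          ((∏ i, wμ (u i) : ℝ≥0) : ℝ) * (f (fun i => pμ (u i)) - c)^2)
        (g := fun (t : Fin n → Fin D) => (fun i => some (t i) : Fin n → Option (Fin D)))
        (s := Finset.univ)
        (fun x _ y _ h => hinj h)
      refine le_trans (le_of_eq himgeq.symm) ?_
      refine Finset.sum_le_sum_of_subset_of_nonneg (Finset.subset_univ _) ?_
      intro u _ _
      positivity
    have hterm : ∀ t : Fin n → Fin D,
        ((D:ℝ)⁻¹)^n * (f (fun i => e (t i)) - c)^2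
          = 4 * (((∏ i, wμ (some (t i)) : ℝ≥0) : ℝ) * (f (fun i => pμ (some (t i))) - c)^2) := by
      intro t
      have hpe : (fun i => pμ (some (t i))) = (fun i => e (t i)) := rfl
      have hws : ∀ j : Fin D, wμ (some j) = q * (D:ℝ≥0)⁻¹ := fun j => rfl
      have hw : ((∏ i, wμ (some (t i)) : ℝ≥0) : ℝ) = ((q:ℝ) * (D:ℝ)⁻¹)^n := by
        rw [Finset.prod_congr rfl (fun i _ => hws (t i)), Finset.prod_const,
          Finset.card_univ, Fintype.card_fin]
        push_cast
        ring
      rw [hpe, hw, mul_pow, hqn]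
      ring
    calc ∑ t : Fin n → Fin D, ((D:ℝ)⁻¹)^n * (f (fun i => e (t i)) - c)^2
        = 4 * ∑ t : Fin n → Fin D,
            ((∏ i, wμ (some (t i)) : ℝ≥0) : ℝ) * (f (fun i => pμ (some (t i))) - c)^2 := by
          rw [Finset.sum_congr rfl (fun t _ => hterm t), ← Finset.mul_sum]
      _ ≤ 4 * ∑ u : Fin n → Option (Fin D),
            ((∏ i, wμ (u i) : ℝ≥0) : ℝ) * (f (fun i => pμ (u i)) - c)^2 := by
          linarith only [himg]
  -- weights on the μ' side
  have hWnn : ∀ t : Fin n → Fin D, (0:ℝ) ≤ ((D:ℝ)⁻¹)^n := fun _ => by positivity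
  have hWsum : ∑ _t : Fin n → Fin D, ((D:ℝ)⁻¹)^n = 1 := by
    calc ∑ _t : Fin n → Fin D, ((D:ℝ)⁻¹)^n
        = ∑ t : Fin n → Fin D, ∏ _i : Fin n, (D:ℝ)⁻¹ :=
          Finset.sum_congr rfl (fun t _ => by
            rw [Finset.prod_const, Finset.card_univ, Fintype.card_fin])
      _ = (∑ _k : Fin D, (D:ℝ)⁻¹)^n := sum_prod_pow n (fun _ : Fin D => (D:ℝ)⁻¹)
      _ = 1 := by
          rw [Finset.sum_const, Finset.card_univ, Fintype.card_fin, nsmul_eq_mul,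
            mul_inv_cancel₀ hDR.ne', one_pow]
  set b : ℝ := ∑ t : Fin n → Fin D, ((D:ℝ)⁻¹)^n * f (fun i => e (t i)) with hbdef
  set s : ℝ := (1 - ε)/4 with hsdef
  have hs0 : 0 < s := by rw [hsdef]; linarith
  have hsc : (1 - ε)^2/16 = s^2 := by rw [hsdef]; ring
  -- Jensen on the μ' side for both centers
  have hJ1 : (b - m)^2 < s^2 := by
    have := sum_sq_jensen (fun _ : Fin n → Fin D => ((D:ℝ)⁻¹)^n)
      (fun t => f (fun i => e (t i))) hWnn hWsum m
    rw [hM'] at h2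
    rw [hE' m] at h2
    rw [hsc] at h2
    exact lt_of_le_of_lt this h2
  have hJ2 : (b - Mμ)^2 < 4 * s^2 := by
    have hcs := sum_sq_jensen (fun _ : Fin n → Fin D => ((D:ℝ)⁻¹)^n)
      (fun t => f (fun i => e (t i))) hWnn hWsum Mμ
    rw [hMμ] at h1
    rw [hsc] at h1
    have h3 := le_trans hcs (hcoup Mμ)
    linarith only [h1, h3, hcs]
  -- final contradiction
  have hqm : (q:ℝ) * m ≤ m := by nlinarith only [hqR1, hqR0, hmnn]
  have hMμle : Mμ ≤ 4⁻¹ * m := by rw [hMμdef]; linarith only [hqm]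
  have hgap : 3 * s ≤ m - Mμ := by rw [hsdef]; linarith only [hm1, hMμle, hε1]
  have hb1 : m - b < s := by nlinarith only [hJ1, hs0, sq_nonneg (m - b - s)]
  have hb2 : b - Mμ < 2*s := by nlinarith only [hJ2, hs0, sq_nonneg (b - Mμ - 2*s)]
  linarith only [hb1, hb2, hgap, hs0]
end

section
/- The complementary missing mass M̂^⊥(x) = μ(∪_{i∈[n]} B(x_i,r)) is (1,0)-self-bounded: for every x ∈ X^n, ∑_{k=1}^n ( M̂^⊥(x) − inf_{y∈X} M̂^⊥(S^k_y x) ) ≤ M̂^⊥(x), where S^k_y x replaces the k-th coordinate of x by y. -/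
open MeasureTheory Metric

/-- The envelope (complementary missing) mass `M̂⊥(x) = μ(⋃_i B(x_i,r))` is
`(1,0)`-self-bounded: `∑_k (M̂⊥(x) - inf_y M̂⊥(S^k_y x)) ≤ M̂⊥(x)`. -/
theorem stmt13 {X : Type*} [MetricSpace X] [Nonempty X]
    [MeasurableSpace X] [BorelSpace X]
    (μ : Measure X) [IsProbabilityMeasure μ] (n : ℕ) (r : ℝ) (x : Fin n → X) :
    ∑ k : Fin n,
        ((μ (⋃ i, closedBall (x i) r)).toReal -
          ⨅ y : X, (μ (⋃ i, closedBall (Function.update x k y i) r)).toReal)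
      ≤ (μ (⋃ i, closedBall (x i) r)).toReal := by
  set U : Set X := ⋃ i, closedBall (x i) r with hU
  set V : Fin n → Set X := fun k => ⋃ i ∈ ({k}ᶜ : Set (Fin n)), closedBall (x i) r with hV
  set D : Fin n → Set X := fun k => U \ V k with hD
  have hUm : MeasurableSet U := MeasurableSet.iUnion fun i => measurableSet_closedBall
  have hVm : ∀ k, MeasurableSet (V k) := fun k =>
    MeasurableSet.biUnion (Set.to_countable _) fun i _ => measurableSet_closedBall
  have hDm : ∀ k, MeasurableSet (D k) := fun k => hUm.diff (hVm k)
  -- each term bounded by measure of D k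
  have key : ∀ k : Fin n,
      (μ U).toReal - (⨅ y : X, (μ (⋃ i, closedBall (Function.update x k y i) r)).toReal)
        ≤ (μ (D k)).toReal := by
    intro k
    have hinf : (μ (V k)).toReal ≤
        ⨅ y : X, (μ (⋃ i, closedBall (Function.update x k y i) r)).toReal := by
      refine le_ciInf fun y => ?_
      have hsub : V k ⊆ ⋃ i, closedBall (Function.update x k y i) r := by
        intro z hz
        simp only [hV, Set.mem_iUnion, Set.mem_compl_iff, Set.mem_singleton_iff] at hz
        obtain ⟨i, hik, hzi⟩ := hz
        exact Set.mem_iUnion.2 ⟨i, by rwa [Function.update_of_ne hik]⟩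
      exact ENNReal.toReal_mono (measure_ne_top μ _) (measure_mono hsub)
    have hUsub : U ⊆ V k ∪ D k := fun z hz => by
      by_cases h : z ∈ V k
      · exact Or.inl h
      · exact Or.inr ⟨hz, h⟩
    have hμ : (μ U).toReal ≤ (μ (V k)).toReal + (μ (D k)).toReal := by
      have := measure_union_le (μ := μ) (V k) (D k)
      have h1 : μ U ≤ μ (V k) + μ (D k) := le_trans (measure_mono hUsub) this
      have := ENNReal.toReal_mono (ENNReal.add_lt_top.2 ⟨measure_lt_top μ _, measure_lt_top μ _⟩).ne h1
      rwa [ENNReal.toReal_add (measure_ne_top μ _) (measure_ne_top μ _)] at this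
    linarith [hinf, hμ]
  calc ∑ k : Fin n,
        ((μ U).toReal - ⨅ y : X, (μ (⋃ i, closedBall (Function.update x k y i) r)).toReal)
      ≤ ∑ k : Fin n, (μ (D k)).toReal := Finset.sum_le_sum fun k _ => key k
    _ ≤ (μ U).toReal := by
        have hdisj : Pairwise (Function.onFun Disjoint D) := by
          intro k j hkj
          refine Set.disjoint_left.2 fun z hzk hzj => ?_
          have hzU : z ∈ U := hzk.1
          have hk : z ∈ closedBall (x k) r := by
            rcases Set.mem_iUnion.1 hzU with ⟨i, hi⟩
            by_cases h : i = k
            · rwa [h] at hi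
            · exact absurd (Set.mem_biUnion (s := ({k}ᶜ : Set (Fin n)))
                (t := fun i => closedBall (x i) r) (by simp [h]) hi) hzk.2
          exact hzj.2 (Set.mem_biUnion (s := ({j}ᶜ : Set (Fin n)))
            (t := fun i => closedBall (x i) r) (by simpa using hkj) hk)
        have hsum : ∑ k : Fin n, μ (D k) = μ (⋃ k, D k) := by
          rw [measure_iUnion hdisj hDm, tsum_fintype]
        rw [← ENNReal.toReal_sum (fun k _ => measure_ne_top μ _), hsum]
        exact ENNReal.toReal_mono (measure_ne_top μ _) (measure_mono (Set.iUnion_subset fun k => Set.diff_subset))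
end

section
/- The complementary Good–Turing statistic G^⊥(x) = (1/n) ∑_{j=1}^n 1{x_j ∈ ∪_{i≠j} B(x_i,r)} is (2,0)-self-bounded, and moreover for every k and x, G^⊥(x) − inf_y G^⊥(S^k_y x) ≤ (1 + h(x,r))/n, where h(x,r) is the largest cardinality of a subsequence of x whose points are pairwise separated by more than r but all contained in some closed ball of radius r. -/
open Metric
open scoped Classical

/-- `locSep x r` is the largest cardinality of a subsequence of `x` whose points are
pairwise separated by more than `r` but all contained in some closed ball of radius `r`. -/
noncomputable def locSep {X : Type*} [MetricSpace X] {n : ℕ} (x : Fin n → X) (r : ℝ) : ℕ :=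
  sSup {k | ∃ S : Finset (Fin n), S.card = k ∧
    (∃ y : X, ∀ i ∈ S, dist y (x i) ≤ r) ∧
    (∀ i ∈ S, ∀ j ∈ S, i ≠ j → r < dist (x i) (x j))}

/-- The complementary Good–Turing statistic `G⊥(x) = (1/n)∑_j 1{x_j ∈ ⋃_{i≠j} B(x_i,r)}`. -/
noncomputable def Gperp {X : Type*} [MetricSpace X] {n : ℕ} (r : ℝ) (x : Fin n → X) : ℝ :=
  (1 / n) * ∑ j : Fin n,
    (if ∃ i : Fin n, i ≠ j ∧ dist (x j) (x i) ≤ r then (1 : ℝ) else 0)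

namespace Stmt14Aux

variable {X : Type*} [MetricSpace X] {n : ℕ}

noncomputable def b (r : ℝ) (x : Fin n → X) (j : Fin n) : ℝ :=
  if ∃ i : Fin n, i ≠ j ∧ dist (x j) (x i) ≤ r then (1 : ℝ) else 0

lemma b_nonneg (r : ℝ) (x : Fin n → X) (j : Fin n) : 0 ≤ b r x j := by
  unfold b; split <;> norm_num

lemma b_le_one (r : ℝ) (x : Fin n → X) (j : Fin n) : b r x j ≤ 1 := by
  unfold b; split <;> norm_num

lemma Gperp_eq (r : ℝ) (x : Fin n → X) : Gperp r x = (1 / n) * ∑ j, b r x j := rfl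

noncomputable def T (r : ℝ) (x : Fin n → X) (k : Fin n) : Finset (Fin n) :=
  Finset.univ.filter (fun j => j ≠ k ∧ dist (x j) (x k) ≤ r ∧
    ∀ i : Fin n, i ≠ j → i ≠ k → r < dist (x j) (x i))

lemma mem_T {r : ℝ} {x : Fin n → X} {k j : Fin n} :
    j ∈ T r x k ↔ j ≠ k ∧ dist (x j) (x k) ≤ r ∧
      ∀ i : Fin n, i ≠ j → i ≠ k → r < dist (x j) (x i) := by
  simp [T]

lemma key (r : ℝ) (x : Fin n → X) (k : Fin n) (y : X) :
    ∑ j, b r x j ≤ b r x k + (T r x k).card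
      + ∑ j, b r (Function.update x k y) j := by
  classical
  set x' := Function.update x k y with hx'
  have hk : k ∉ T r x k := by simp [mem_T]
  set A : Finset (Fin n) := insert k (T r x k) with hA
  have hsplit : ∑ j, b r x j
      = ∑ j ∈ Finset.univ \ A, b r x j + ∑ j ∈ A, b r x j :=
    (Finset.sum_sdiff (Finset.subset_univ A)).symm
  have hA_sum : ∑ j ∈ A, b r x j ≤ b r x k + (T r x k).card := by
    rw [hA, Finset.sum_insert hk]
    have : ∑ j ∈ T r x k, b r x j ≤ ∑ j ∈ T r x k, (1 : ℝ) :=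
      Finset.sum_le_sum fun j _ => b_le_one r x j
    simpa using add_le_add_left this (b r x k)
  have hpt : ∀ j ∈ Finset.univ \ A, b r x j ≤ b r x' j := by
    intro j hj
    simp only [hA, Finset.mem_sdiff, Finset.mem_insert, not_or] at hj
    obtain ⟨-, hjk, hjT⟩ := hj
    by_cases h : ∃ i : Fin n, i ≠ j ∧ dist (x j) (x i) ≤ r
    · by_cases h2 : ∃ i : Fin n, i ≠ j ∧ i ≠ k ∧ dist (x j) (x i) ≤ r
      · obtain ⟨i, hij, hik, hd⟩ := h2
        have hx'1 : b r x' j = 1 := by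
          unfold b
          rw [if_pos]
          refine ⟨i, hij, ?_⟩
          rw [hx', Function.update_of_ne hjk, Function.update_of_ne hik]
          exact hd
        rw [hx'1]; exact b_le_one r x j
      · exfalso
        push_neg at h2
        obtain ⟨i, hij, hd⟩ := h
        have hik : i = k := by
          by_contra hik
          exact absurd hd (not_le.mpr (h2 i hij hik))
        apply hjT
        rw [mem_T]
        exact ⟨hjk, hik ▸ hd, fun i' hi'j hi'k => h2 i' hi'j hi'k⟩
    · have hb0 : b r x j = 0 := by unfold b; rw [if_neg h]
      rw [hb0]; exact b_nonneg r x' j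
  calc ∑ j, b r x j
      = ∑ j ∈ Finset.univ \ A, b r x j + ∑ j ∈ A, b r x j := hsplit
    _ ≤ ∑ j ∈ Finset.univ \ A, b r x' j + (b r x k + (T r x k).card) :=
        add_le_add (Finset.sum_le_sum hpt) hA_sum
    _ ≤ ∑ j, b r x' j + (b r x k + (T r x k).card) := by
        exact add_le_add_left (Finset.sum_le_sum_of_subset_of_nonneg
          (Finset.subset_univ _) (fun j _ _ => b_nonneg r x' j)) _
    _ = b r x k + (T r x k).card + ∑ j, b r x' j := by ring

lemma decr [Nonempty X] (hn : 0 < n) (r : ℝ) (x : Fin n → X) (k : Fin n) :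
    Gperp r x - ⨅ y : X, Gperp r (Function.update x k y)
      ≤ (b r x k + ((T r x k).card : ℝ)) / n := by
  have hnpos : (0 : ℝ) < n := by exact_mod_cast hn
  have hinf : Gperp r x - (b r x k + ((T r x k).card : ℝ)) / n
      ≤ ⨅ y : X, Gperp r (Function.update x k y) := by
    apply le_ciInf
    intro y
    rw [Gperp_eq, Gperp_eq, sub_le_iff_le_add]
    calc (1 / (n : ℝ)) * ∑ j, b r x j
        ≤ (1 / n) * (b r x k + (T r x k).card
            + ∑ j, b r (Function.update x k y) j) :=
          mul_le_mul_of_nonneg_left (key r x k y) (by positivity)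
      _ = (1 / n) * ∑ j, b r (Function.update x k y) j
            + (b r x k + ((T r x k).card : ℝ)) / n := by ring
  linarith

lemma card_T_le_locSep (r : ℝ) (x : Fin n → X) (k : Fin n) :
    (T r x k).card ≤ locSep x r := by
  apply le_csSup
  · refine ⟨n, ?_⟩
    rintro m ⟨S, hS, -, -⟩
    exact hS ▸ (Finset.card_le_univ S).trans_eq (Finset.card_fin n)
  · refine ⟨T r x k, rfl, ⟨x k, ?_⟩, ?_⟩
    · intro i hi
      rw [dist_comm]
      exact (mem_T.mp hi).2.1
    · intro i hi j hj hij
      exact (mem_T.mp hi).2.2 j (Ne.symm hij) (mem_T.mp hj).1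

lemma sum_cards (r : ℝ) (x : Fin n → X) :
    ∑ k : Fin n, ((T r x k).card : ℝ) ≤ ∑ j : Fin n, b r x j := by
  have h1 : ∀ k : Fin n, ((T r x k).card : ℝ)
      = ∑ j : Fin n, (if j ∈ T r x k then (1 : ℝ) else 0) := by
    intro k
    rw [Finset.sum_boole]
    congr 1
    congr 1
    ext j
    simp
  simp_rw [h1]
  rw [Finset.sum_comm]
  apply Finset.sum_le_sum
  intro j _
  have hsum : ∑ k : Fin n, (if j ∈ T r x k then (1 : ℝ) else 0)
      = ((Finset.univ.filter (fun k => j ∈ T r x k)).card : ℝ) := by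
    rw [Finset.sum_boole]
  rw [hsum]
  by_cases hne : (Finset.univ.filter (fun k => j ∈ T r x k)).Nonempty
  · obtain ⟨k0, hk0⟩ := hne
    rw [Finset.mem_filter] at hk0
    have hb : b r x j = 1 := by
      unfold b
      rw [if_pos]
      obtain ⟨hjk, hd, -⟩ := mem_T.mp hk0.2
      exact ⟨k0, Ne.symm hjk, hd⟩
    have hcard : (Finset.univ.filter (fun k => j ∈ T r x k)).card ≤ 1 := by
      apply Finset.card_le_one.mpr
      intro a ha c hc
      rw [Finset.mem_filter] at ha hc
      by_contra hac
      obtain ⟨hja, hda, hfa⟩ := mem_T.mp ha.2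
      obtain ⟨hjc, hdc, hfc⟩ := mem_T.mp hc.2
      exact absurd hdc (not_le.mpr (hfa c (Ne.symm hjc) (fun h => hac h.symm)))
    rw [hb]
    exact_mod_cast hcard
  · rw [Finset.not_nonempty_iff_eq_empty] at hne
    rw [hne]
    simpa using b_nonneg r x j

end Stmt14Aux

open Stmt14Aux in
/-- `G⊥` is `(2,0)`-self-bounded, and each coordinate-wise decrement is bounded by
`(1 + h(x,r))/n`. -/
theorem stmt14 {X : Type*} [MetricSpace X] [Nonempty X] (n : ℕ) (hn : 0 < n) (r : ℝ) :
    (∀ x : Fin n → X,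
      ∑ k : Fin n, (Gperp r x - ⨅ y : X, Gperp r (Function.update x k y))
        ≤ 2 * Gperp r x) ∧
    (∀ (x : Fin n → X) (k : Fin n),
      Gperp r x - ⨅ y : X, Gperp r (Function.update x k y)
        ≤ (1 + (locSep x r : ℝ)) / n) := by
  have hnpos : (0 : ℝ) < n := by exact_mod_cast hn
  constructor
  · intro x
    calc ∑ k : Fin n, (Gperp r x - ⨅ y : X, Gperp r (Function.update x k y))
        ≤ ∑ k : Fin n, (b r x k + ((T r x k).card : ℝ)) / n :=
          Finset.sum_le_sum fun k _ => decr hn r x k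
      _ = (∑ k : Fin n, b r x k + ∑ k : Fin n, ((T r x k).card : ℝ)) / n := by
          rw [← Finset.sum_div, Finset.sum_add_distrib]
      _ ≤ (∑ j : Fin n, b r x j + ∑ j : Fin n, b r x j) / n :=
          (div_le_div_iff_of_pos_right hnpos).mpr (by linarith [sum_cards r x])
      _ = 2 * Gperp r x := by
          rw [Gperp_eq]; ring
  · intro x k
    calc Gperp r x - ⨅ y : X, Gperp r (Function.update x k y)
        ≤ (b r x k + ((T r x k).card : ℝ)) / n := decr hn r x k
      _ ≤ (1 + (locSep x r : ℝ)) / n := by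
          gcongr
          · exact b_le_one r x k
          · exact_mod_cast card_T_le_locSep r x k
end

section
/- Suppose X ≥ 0 is a random variable, w, λ > 0, b ≥ 0, and for all t > 0, P{X > w + t} ≤ b e^{−λt}. Then for every p ≥ 1, ‖X‖_p ≤ 2λ^{−1} b^{1/p} p + w. -/
open MeasureTheory Set Real

lemma exp_integral_Ioi (c : ℝ) (hc : 0 < c) :
    ∫ x in Ioi (0:ℝ), Real.exp (-(c * x)) = 1 / c := by
  have := MeasureTheory.integral_comp_mul_left_Ioi (fun x => Real.exp (-x)) 0 hc
  simp only [mul_zero] at this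
  rw [this, integral_exp_neg_Ioi]
  simp [abs_of_nonneg (inv_nonneg.2 hc.le), one_div]

lemma exp_lintegral_Ioi (c : ℝ) (hc : 0 < c) :
    ∫⁻ x in Ioi (0:ℝ), ENNReal.ofReal (Real.exp (-(c * x))) = ENNReal.ofReal (1 / c) := by
  rw [← ofReal_integral_eq_lintegral_ofReal, exp_integral_Ioi c hc]
  · exact (exp_neg_integrableOn_Ioi 0 hc).congr_fun (by intro x _; simp [neg_mul]) measurableSet_Ioi
  · exact Filter.Eventually.of_forall fun x => (Real.exp_pos _).le

lemma key_pt {p l t : ℝ} (hp : 1 ≤ p) (hl : 0 < l) (ht : 0 < t) :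
    t ^ (p - 1) * Real.exp (-(l * t)) ≤ (2 * p / l) ^ (p - 1) * Real.exp (-(l / 2 * t)) := by
  have hp0 : (0:ℝ) < p := lt_of_lt_of_le one_pos hp
  have hc : (0:ℝ) < 2 * p / l := by positivity
  set u : ℝ := l * t / 2 with hu
  have hu0 : 0 < u := by positivity
  have ht' : t = 2 * u / l := by field_simp [hu]; rw [hu]; ring
  have h1 : t ^ (p - 1) = (2 * p / l) ^ (p - 1) * (u / p) ^ (p - 1) := by
    rw [← Real.mul_rpow hc.le (by positivity)]
    congr 1
    field_simp [ht']
    ring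
  have h2 : (u / p) ^ (p - 1) ≤ Real.exp u := by
    have hup : 0 < u / p := by positivity
    rw [Real.rpow_def_of_pos hup]
    apply Real.exp_le_exp.2
    rw [mul_comm]
    have hlog : Real.log (u / p) ≤ u / p - 1 := Real.log_le_sub_one_of_pos hup
    have h3 : (p - 1) * Real.log (u / p) ≤ (p - 1) * (u / p - 1) := by
      apply mul_le_mul_of_nonneg_left hlog (by linarith)
    refine h3.trans ?_
    rw [div_sub_one hp0.ne']
    rw [← mul_div_assoc, div_le_iff₀ hp0]
    nlinarith
  calc t ^ (p - 1) * Real.exp (-(l * t))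
      = (2 * p / l) ^ (p - 1) * (u / p) ^ (p - 1) * Real.exp (-(l * t)) := by rw [h1]
    _ ≤ (2 * p / l) ^ (p - 1) * Real.exp u * Real.exp (-(l * t)) := by
        apply mul_le_mul_of_nonneg_right _ (Real.exp_pos _).le
        exact mul_le_mul_of_nonneg_left h2 (Real.rpow_nonneg hc.le _)
    _ = (2 * p / l) ^ (p - 1) * Real.exp (-(l / 2 * t)) := by
        rw [mul_assoc, ← Real.exp_add]
        congr 2
        field_simp [hu]
        ring

/-- Converting an exponential tail bound into a moment bound:
if `P{X > w + t} ≤ b e^{-λ t}` for all `t > 0`, then `‖X‖_p ≤ 2 λ⁻¹ b^{1/p} p + w`. -/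
theorem stmt15 {Ω : Type*} [MeasurableSpace Ω] (P : Measure Ω) [IsProbabilityMeasure P]
    (Y : Ω → ℝ) (hY : ∀ ω, 0 ≤ Y ω)
    (w l b p : ℝ) (hw : 0 < w) (hl : 0 < l) (hb : 0 ≤ b) (hp : 1 ≤ p)
    (htail : ∀ t > 0, (P {ω | Y ω > w + t}).toReal ≤ b * Real.exp (-l * t)) :
    (∫ ω, |Y ω| ^ p ∂P) ^ (1 / p) ≤ 2 * l⁻¹ * b ^ (1 / p) * p + w := by
  have hp0 : (0:ℝ) < p := lt_of_lt_of_le one_pos hp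
  have habs : (fun ω => |Y ω| ^ p) = fun ω => Y ω ^ p := by
    funext ω; rw [abs_of_nonneg (hY ω)]
  rw [show (∫ ω, |Y ω| ^ p ∂P) = ∫ ω, Y ω ^ p ∂P from by rw [← habs]]
  by_cases hint : Integrable (fun ω => Y ω ^ p) P
  swap
  · rw [integral_undef hint, Real.zero_rpow (by positivity : (1:ℝ)/p ≠ 0)]
    positivity
  have hYae : AEMeasurable Y P := by
    have h1 : AEMeasurable (fun ω => Y ω ^ p) P := hint.aemeasurable
    have h2 : AEMeasurable (fun ω => (Y ω ^ p) ^ p⁻¹) P :=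
      (Real.continuous_rpow_const (inv_nonneg.2 hp0.le)).measurable.comp_aemeasurable h1
    have h3 : (fun ω => (Y ω ^ p) ^ p⁻¹) = Y := by
      funext ω
      rw [← Real.rpow_mul (hY ω), mul_inv_cancel₀ hp0.ne', Real.rpow_one]
    rwa [h3] at h2
  set Z : Ω → ℝ := fun ω => max (Y ω - w) 0 with hZ
  have hZnn : ∀ ω, 0 ≤ Z ω := fun ω => le_max_right _ _
  have hZm : AEMeasurable Z P := (hYae.sub aemeasurable_const).max aemeasurable_const
  have hYZ : ∀ ω, Y ω ≤ Z ω + w := fun ω => by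
    have h := le_max_left (Y ω - w) 0
    simp only [hZ]; linarith
  have htailZ : ∀ t ∈ Ioi (0:ℝ), P {a | t < Z a} ≤ ENNReal.ofReal (b * Real.exp (-(l * t))) := by
    intro t ht
    rw [mem_Ioi] at ht
    have hset : {a | t < Z a} = {ω | Y ω > w + t} := by
      ext ω
      simp only [Set.mem_setOf_eq, hZ, lt_max_iff, gt_iff_lt]
      constructor
      · rintro (h | h)
        · linarith
        · linarith
      · intro h; left; linarith
    rw [hset]
    refine (ENNReal.le_ofReal_iff_toReal_le (measure_ne_top P _) (by positivity)).2 ?_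
    have := htail t ht
    rwa [neg_mul] at this
  have hA : ∫⁻ ω, ENNReal.ofReal (Z ω ^ p) ∂P
      = ENNReal.ofReal p * ∫⁻ t in Ioi 0, P {a | t < Z a} * ENNReal.ofReal (t ^ (p - 1)) :=
    lintegral_rpow_eq_lintegral_meas_lt_mul P (Filter.Eventually.of_forall hZnn) hZm hp0
  have hB : ∫⁻ t in Ioi 0, P {a | t < Z a} * ENNReal.ofReal (t ^ (p - 1))
      ≤ ∫⁻ t in Ioi 0, ENNReal.ofReal (b * (2 * p / l) ^ (p - 1))
          * ENNReal.ofReal (Real.exp (-(l / 2 * t))) := by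
    refine setLIntegral_mono' measurableSet_Ioi fun t ht => ?_
    have htpos : 0 < t := mem_Ioi.1 ht
    calc P {a | t < Z a} * ENNReal.ofReal (t ^ (p - 1))
        ≤ ENNReal.ofReal (b * Real.exp (-(l * t))) * ENNReal.ofReal (t ^ (p - 1)) :=
          mul_le_mul_left (htailZ t ht) _
      _ = ENNReal.ofReal (b * (t ^ (p - 1) * Real.exp (-(l * t)))) := by
          rw [← ENNReal.ofReal_mul (by positivity)]
          congr 1; ring
      _ ≤ ENNReal.ofReal (b * ((2 * p / l) ^ (p - 1) * Real.exp (-(l / 2 * t)))) :=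
          ENNReal.ofReal_le_ofReal (mul_le_mul_of_nonneg_left (key_pt hp hl htpos) hb)
      _ = ENNReal.ofReal (b * (2 * p / l) ^ (p - 1)) * ENNReal.ofReal (Real.exp (-(l / 2 * t))) := by
          rw [← ENNReal.ofReal_mul (by positivity), mul_assoc]
  have hC : ∫⁻ ω, ENNReal.ofReal (Z ω ^ p) ∂P ≤ ENNReal.ofReal (b * (2 * p / l) ^ p) := by
    calc ∫⁻ ω, ENNReal.ofReal (Z ω ^ p) ∂P
        ≤ ENNReal.ofReal p * ∫⁻ t in Ioi 0, ENNReal.ofReal (b * (2 * p / l) ^ (p - 1))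
            * ENNReal.ofReal (Real.exp (-(l / 2 * t))) := by
          rw [hA]; exact mul_le_mul_right hB _
      _ = ENNReal.ofReal p * (ENNReal.ofReal (b * (2 * p / l) ^ (p - 1))
            * ENNReal.ofReal (1 / (l / 2))) := by
          rw [lintegral_const_mul' _ _ ENNReal.ofReal_ne_top, exp_lintegral_Ioi (l/2) (by positivity)]
      _ = ENNReal.ofReal (b * (2 * p / l) ^ p) := by
          rw [← ENNReal.ofReal_mul (by positivity), ← ENNReal.ofReal_mul hp0.le]
          congr 1
          have hrw : (2 * p / l : ℝ) ^ p = (2 * p / l) ^ (p - 1) * (2 * p / l) := by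
            rw [← Real.rpow_add_one (by positivity : (2 * p / l : ℝ) ≠ 0) (p - 1), sub_add_cancel]
          rw [hrw]
          field_simp
  have hmink : (∫⁻ ω, ENNReal.ofReal (Y ω ^ p) ∂P) ^ (1/p)
      ≤ ENNReal.ofReal (b ^ (1/p) * (2 * p / l) + w) := by
    have step1 : ∫⁻ ω, ENNReal.ofReal (Y ω ^ p) ∂P
        ≤ ∫⁻ ω, (((fun ω => ENNReal.ofReal (Z ω)) + (fun _ => ENNReal.ofReal w) : Ω → ENNReal)) ω ^ p ∂P := by
      apply lintegral_mono fun ω => ?_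
      rw [← ENNReal.ofReal_rpow_of_nonneg (hY ω) hp0.le]
      apply ENNReal.rpow_le_rpow _ hp0.le
      simp only [Pi.add_apply]
      rw [← ENNReal.ofReal_add (hZnn ω) hw.le]
      exact ENNReal.ofReal_le_ofReal (hYZ ω)
    have step2 := ENNReal.lintegral_Lp_add_le (μ := P)
      (f := fun ω => ENNReal.ofReal (Z ω)) (g := fun _ => ENNReal.ofReal w)
      hZm.ennreal_ofReal aemeasurable_const hp
    have hZeq : (∫⁻ ω, ENNReal.ofReal (Z ω) ^ p ∂P) ^ (1/p)
        ≤ ENNReal.ofReal (b ^ (1/p) * (2 * p / l)) := by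
      have : ∫⁻ ω, ENNReal.ofReal (Z ω) ^ p ∂P = ∫⁻ ω, ENNReal.ofReal (Z ω ^ p) ∂P := by
        congr 1; funext ω; rw [ENNReal.ofReal_rpow_of_nonneg (hZnn ω) hp0.le]
      rw [this]
      calc (∫⁻ ω, ENNReal.ofReal (Z ω ^ p) ∂P) ^ (1/p)
          ≤ ENNReal.ofReal (b * (2 * p / l) ^ p) ^ (1/p) :=
            ENNReal.rpow_le_rpow hC (by positivity)
        _ = ENNReal.ofReal ((b * (2 * p / l) ^ p) ^ (1/p)) := by
            rw [ENNReal.ofReal_rpow_of_nonneg (by positivity) (by positivity)]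
        _ = ENNReal.ofReal (b ^ (1/p) * (2 * p / l)) := by
            congr 1
            rw [Real.mul_rpow hb (by positivity), ← Real.rpow_mul (by positivity),
              mul_one_div_cancel hp0.ne', Real.rpow_one]
    have hWeq : (∫⁻ (_ : Ω), ENNReal.ofReal w ^ p ∂P) ^ (1/p) = ENNReal.ofReal w := by
      rw [lintegral_const, measure_univ, mul_one, ← ENNReal.rpow_mul,
        mul_one_div_cancel hp0.ne', ENNReal.rpow_one]
    calc (∫⁻ ω, ENNReal.ofReal (Y ω ^ p) ∂P) ^ (1/p)
        ≤ (∫⁻ ω, (((fun ω => ENNReal.ofReal (Z ω)) + (fun _ => ENNReal.ofReal w) : Ω → ENNReal)) ω ^ p ∂P) ^ (1/p) :=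
          ENNReal.rpow_le_rpow step1 (by positivity)
      _ ≤ (∫⁻ ω, ENNReal.ofReal (Z ω) ^ p ∂P) ^ (1/p)
            + (∫⁻ (_ : Ω), ENNReal.ofReal w ^ p ∂P) ^ (1/p) := step2
      _ ≤ ENNReal.ofReal (b ^ (1/p) * (2 * p / l)) + ENNReal.ofReal w := by
          rw [hWeq]; exact add_le_add_left hZeq _
      _ = ENNReal.ofReal (b ^ (1/p) * (2 * p / l) + w) := by
          rw [ENNReal.ofReal_add (by positivity) hw.le]
  have hlhs : ∫ ω, Y ω ^ p ∂P = (∫⁻ ω, ENNReal.ofReal (Y ω ^ p) ∂P).toReal := by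
    rw [integral_eq_lintegral_of_nonneg_ae
      (Filter.Eventually.of_forall fun ω => Real.rpow_nonneg (hY ω) p) hint.1]
  rw [hlhs, ENNReal.toReal_rpow]
  have final := ENNReal.toReal_le_of_le_ofReal (by positivity) hmink
  calc ((∫⁻ ω, ENNReal.ofReal (Y ω ^ p) ∂P) ^ (1/p)).toReal
      ≤ b ^ (1/p) * (2 * p / l) + w := final
    _ = 2 * l⁻¹ * b ^ (1/p) * p + w := by
        field_simp
end

section
/- If X_1, X_2, ... are iid from a Borel probability measure μ on a separable metric space (X,d) and r > 0, then the conditional missing mass M̂(X_1^n, r) = μ(∩_{i=1}^n B(X_i,r)^c) converges to 0 almost surely as n → ∞. -/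
open MeasureTheory Metric Filter

lemma aux_never_hit {S : Type*} [MeasurableSpace S]
    (μ : Measure S) [IsProbabilityMeasure μ]
    {Ω : Type*} [MeasurableSpace Ω] (P : Measure Ω) [IsProbabilityMeasure P]
    (X : ℕ → Ω → S)
    (hindep : ProbabilityTheory.iIndepFun X P)
    (hident : ∀ i, Measure.map (X i) P = μ)
    (hmeas : ∀ i, Measurable (X i))
    {B : Set S} (hB : MeasurableSet B) (hB0 : μ B ≠ 0) :
    P {ω | ∀ i, X i ω ∉ B} = 0 := by
  have hq : μ Bᶜ < 1 := by
    have := prob_compl_eq_one_sub (μ := μ) hB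
    rw [this]
    have h1 : μ B ≤ 1 := prob_le_one
    exact ENNReal.sub_lt_self ENNReal.one_ne_top one_ne_zero hB0
  have hset : {ω | ∀ i, X i ω ∉ B} = ⋂ i, (X i) ⁻¹' Bᶜ := by
    ext ω; simp [Set.mem_iInter]
  have key : ∀ n : ℕ, P (⋂ i ∈ Finset.range n, (X i) ⁻¹' Bᶜ) = (μ Bᶜ) ^ n := by
    intro n
    have := hindep.meas_biInter (S := Finset.range n) (s := fun i => (X i) ⁻¹' Bᶜ)
      (fun i _ => ⟨Bᶜ, hB.compl, rfl⟩)
    rw [this]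
    have hPi : ∀ i, P ((X i) ⁻¹' Bᶜ) = μ Bᶜ := fun i => by
      rw [← hident i, Measure.map_apply (hmeas i) hB.compl]
    simp only [Set.preimage_compl] at hPi ⊢
    simp [hPi]
  have hle : ∀ n : ℕ, P {ω | ∀ i, X i ω ∉ B} ≤ (μ Bᶜ) ^ n := by
    intro n
    rw [← key n, hset]
    exact measure_mono (fun ω hω => Set.mem_iInter₂.2 fun i _ => Set.mem_iInter.1 hω i)
  have htend : Tendsto (fun n : ℕ => (μ Bᶜ) ^ n) atTop (nhds 0) :=
    ENNReal.tendsto_pow_atTop_nhds_zero_of_lt_one hq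
  exact le_antisymm (ge_of_tendsto' htend hle) zero_le

/-- In a separable metric space the conditional missing mass of an iid sample
converges to zero almost surely. -/
theorem stmt18 {S : Type*} [MetricSpace S] [TopologicalSpace.SeparableSpace S]
    [MeasurableSpace S] [BorelSpace S]
    (μ : Measure S) [IsProbabilityMeasure μ] (r : ℝ) (hr : 0 < r)
    {Ω : Type*} [MeasurableSpace Ω] (P : Measure Ω) [IsProbabilityMeasure P]
    (X : ℕ → Ω → S) (hmeas : ∀ i, Measurable (X i))
    (hindep : ProbabilityTheory.iIndepFun X P)
    (hident : ∀ i, Measure.map (X i) P = μ) :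
    ∀ᵐ ω ∂P, Tendsto
      (fun n => (μ (⋂ i ∈ Finset.range n, (closedBall (X i ω) r)ᶜ)).toReal)
      atTop (nhds 0) := by
  haveI : Nonempty S := by
    by_contra h
    rw [not_nonempty_iff] at h
    have : μ Set.univ = 1 := measure_univ
    rw [Set.univ_eq_empty_iff.2 h, measure_empty] at this
    exact zero_ne_one this
  set u : ℕ → S := TopologicalSpace.denseSeq S with hu
  have hdense : DenseRange u := TopologicalSpace.denseRange_denseSeq S
  set B : ℕ → Set S := fun k => ball (u k) (r / 2) with hB
  -- almost surely, every ball B k with positive measure is hit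
  have hae : ∀ᵐ ω ∂P, ∀ k, μ (B k) ≠ 0 → ∃ i, X i ω ∈ B k := by
    rw [ae_all_iff]
    intro k
    by_cases hk : μ (B k) = 0
    · filter_upwards with ω h; exact absurd hk h
    · have h0 : P {ω | ∀ i, X i ω ∉ B k} = 0 :=
        aux_never_hit μ P X hindep hident hmeas measurableSet_ball hk
      have : ∀ᵐ ω ∂P, ¬ (∀ i, X i ω ∉ B k) := by
        rw [ae_iff]; simpa using h0
      filter_upwards [this] with ω h _
      push_neg at h
      obtain ⟨i, hi⟩ := h
      exact ⟨i, hi⟩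
  filter_upwards [hae] with ω hω
  -- the full intersection is null
  have hnull : μ (⋂ i, (closedBall (X i ω) r)ᶜ) = 0 := by
    have hsub : (⋂ i, (closedBall (X i ω) r)ᶜ) ⊆ ⋃ k ∈ {k | μ (B k) = 0}, B k := by
      intro y hy
      obtain ⟨k, hk⟩ := (Metric.denseRange_iff.1 hdense) y (r / 2) (by linarith)
      have hyk : y ∈ B k := by simpa [hB, mem_ball, dist_comm] using hk
      by_cases h0 : μ (B k) = 0
      · exact Set.mem_biUnion h0 hyk
      · exfalso
        obtain ⟨i, hi⟩ := hω k h0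
        have : dist y (X i ω) ≤ r := by
          have h1 : dist y (u k) < r / 2 := hk
          have h2 : dist (X i ω) (u k) < r / 2 := by simpa [hB, mem_ball] using hi
          calc dist y (X i ω) ≤ dist y (u k) + dist (u k) (X i ω) := dist_triangle _ _ _
            _ ≤ r := by rw [dist_comm (u k)]; linarith
        have := Set.mem_iInter.1 hy i
        exact this (mem_closedBall.2 ‹dist y (X i ω) ≤ r›)
    refine measure_mono_null hsub ?_
    exact (measure_biUnion_null_iff (Set.to_countable _)).2 fun k hk => hk
  -- continuity from above
  have hanti : Antitone (fun n => ⋂ i ∈ Finset.range n, (closedBall (X i ω) r)ᶜ) := by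
    intro m n hmn
    exact Set.biInter_subset_biInter_left (fun i hi => Finset.mem_range.2
      (lt_of_lt_of_le (Finset.mem_range.1 hi) hmn))
  have htend : Tendsto (fun n => μ (⋂ i ∈ Finset.range n, (closedBall (X i ω) r)ᶜ))
      atTop (nhds (μ (⋂ n, ⋂ i ∈ Finset.range n, (closedBall (X i ω) r)ᶜ))) :=
    tendsto_measure_iInter_atTop
      (fun n => ((MeasurableSet.biInter (Finset.range n).countable_toSet
        (fun i _ => measurableSet_closedBall.compl))).nullMeasurableSet)
      hanti ⟨0, measure_ne_top _ _⟩
  have hInter : (⋂ n, ⋂ i ∈ Finset.range n, (closedBall (X i ω) r)ᶜ)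
      = ⋂ i, (closedBall (X i ω) r)ᶜ := by
    ext y
    simp only [Set.mem_iInter, Finset.mem_range]
    exact ⟨fun h i => h (i + 1) i (Nat.lt_succ_self i), fun h n i _ => h i⟩
  rw [hInter, hnull] at htend
  have := (ENNReal.tendsto_toReal (a := 0) (by simp)).comp htend
  simpa [Function.comp_def] using this
end

section
/- For p ∈ (1,∞), consider the random element 1_{[0,X]} of L_p[0,∞), where X is a nonnegative real random variable. Then for any r > 0, the local separation statistic of any finite sample is at most 2^p + 1: if points z_1 = 1_{[0,x_1]}, ..., z_k = 1_{[0,x_k]} with x_1 < ... < x_k satisfy ‖z_i − z_j‖_p > r for all i ≠ j and there exists f ∈ L_p with ‖z_i − f‖_p ≤ r for all i, then k ≤ 2^p + 1. -/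
open MeasureTheory

lemma stmt19_norm (p : ℝ) (hp1 : 1 < p) (a b : ℝ) (ha : 0 ≤ a) (hab : a ≤ b) :
    eLpNorm ((Set.Icc (0 : ℝ) a).indicator (fun _ => (1 : ℝ)) -
        (Set.Icc (0 : ℝ) b).indicator (fun _ => (1 : ℝ)))
      (ENNReal.ofReal p) (volume.restrict (Set.Ici (0 : ℝ)))
    = ENNReal.ofReal (b - a) ^ (1 / p) := by
  have hp0 : (0:ℝ) < p := lt_trans one_pos hp1
  have hfun : ((Set.Icc (0 : ℝ) a).indicator (fun _ => (1 : ℝ)) -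
      (Set.Icc (0 : ℝ) b).indicator (fun _ => (1 : ℝ)))
      = (Set.Ioc a b).indicator (fun _ => (-1 : ℝ)) := by
    funext t
    simp only [Pi.sub_apply, Set.indicator_apply, Set.mem_Icc, Set.mem_Ioc]
    rcases lt_or_ge t 0 with h | h
    · rw [if_neg (by rintro ⟨h1, _⟩; linarith), if_neg (by rintro ⟨h1, _⟩; linarith),
        if_neg (by rintro ⟨h1, _⟩; linarith)]
      simp
    · rcases le_or_gt t a with h2 | h2
      · rw [if_pos ⟨h, h2⟩, if_pos ⟨h, le_trans h2 hab⟩,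
          if_neg (by rintro ⟨h3, _⟩; linarith)]
        simp
      · rcases le_or_gt t b with h3 | h3
        · rw [if_neg (by rintro ⟨_, h4⟩; linarith), if_pos ⟨h, h3⟩, if_pos ⟨h2, h3⟩]
          simp
        · rw [if_neg (by rintro ⟨_, h4⟩; linarith), if_neg (by rintro ⟨_, h4⟩; linarith),
            if_neg (by rintro ⟨_, h4⟩; linarith)]
          simp
  rw [hfun, eLpNorm_indicator_const measurableSet_Ioc
      (by simp [ENNReal.ofReal_pos.mpr hp0, ne_of_gt]) ENNReal.ofReal_ne_top]
  have : (volume.restrict (Set.Ici (0:ℝ))) (Set.Ioc a b) = ENNReal.ofReal (b - a) := by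
    have hsub : Set.Ioc a b ⊆ Set.Ici 0 := fun t ht => le_trans ha ht.1.le
    rw [Measure.restrict_apply measurableSet_Ioc, Set.inter_eq_left.mpr hsub, Real.volume_Ioc]
  rw [this, ENNReal.toReal_ofReal hp0.le]
  norm_num

/-- In `L_p[0,∞)`, `1 < p < ∞`, any family of indicator functions `1_[0,x_i]`
which is pairwise more than `r` apart in `L_p` norm and contained in a common
closed `L_p` ball of radius `r` has at most `2^p + 1` elements. -/
theorem stmt19 (p : ℝ) (hp1 : 1 < p) (r : ℝ) (hr : 0 < r) (k : ℕ)
    (x : Fin k → ℝ) (hx0 : ∀ i, 0 ≤ x i) (hmono : StrictMono x)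
    (hsep : ∀ i j : Fin k, i ≠ j →
      ENNReal.ofReal r < eLpNorm
        ((Set.Icc (0 : ℝ) (x i)).indicator (fun _ => (1 : ℝ)) -
          (Set.Icc (0 : ℝ) (x j)).indicator (fun _ => (1 : ℝ)))
        (ENNReal.ofReal p) (volume.restrict (Set.Ici (0 : ℝ))))
    (f : ℝ → ℝ)
    (hfmem : MemLp f (ENNReal.ofReal p) (volume.restrict (Set.Ici (0 : ℝ))))
    (hf : ∀ i, eLpNorm
        ((Set.Icc (0 : ℝ) (x i)).indicator (fun _ => (1 : ℝ)) - f)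
        (ENNReal.ofReal p) (volume.restrict (Set.Ici (0 : ℝ)))
      ≤ ENNReal.ofReal r) :
    (k : ℝ) ≤ 2 ^ p + 1 := by
  have hp0 : (0:ℝ) < p := lt_trans one_pos hp1
  have h2p : (1:ℝ) ≤ 2 ^ p := Real.one_le_rpow (by norm_num) hp0.le
  rcases Nat.lt_or_ge k 2 with hk | hk
  · have : (k:ℝ) ≤ 2 := by exact_mod_cast Nat.le_of_lt_succ (by omega)
    linarith
  -- gap lemma
  have hgap : ∀ i j : Fin k, i < j → r ^ p < x j - x i := by
    intro i j hij
    have h := hsep i j (ne_of_lt hij)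
    rw [stmt19_norm p hp1 _ _ (hx0 i) (hmono hij).le] at h
    have h2 := ENNReal.rpow_lt_rpow h hp0
    rw [← ENNReal.rpow_mul, one_div_mul_cancel hp0.ne', ENNReal.rpow_one,
      ENNReal.ofReal_rpow_of_pos hr] at h2
    exact (ENNReal.ofReal_lt_ofReal_iff_of_nonneg (Real.rpow_nonneg hr.le p)).mp h2
  -- chain lemma
  have hchain : ∀ n : ℕ, ∀ hn : n < k, (n : ℝ) * r ^ p ≤ x ⟨n, hn⟩ - x ⟨0, by omega⟩ := by
    intro n
    induction n with
    | zero => intro hn; simp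
    | succ m ih =>
      intro hn
      have hm : m < k := by omega
      have := hgap ⟨m, hm⟩ ⟨m+1, hn⟩ (by simp [Fin.lt_def])
      have := ih hm
      push_cast
      linarith
  -- triangle inequality
  set μ := volume.restrict (Set.Ici (0:ℝ))
  set q := ENNReal.ofReal p
  have hq1 : (1:ENNReal) ≤ q := by
    rw [show (1:ENNReal) = ENNReal.ofReal 1 by simp]
    exact ENNReal.ofReal_le_ofReal hp1.le
  have hi0 : (0:ℕ) < k := by omega
  have hil : k - 1 < k := by omega
  set i0 : Fin k := ⟨0, hi0⟩
  set il : Fin k := ⟨k-1, hil⟩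
  have hmeas : ∀ i : Fin k, AEStronglyMeasurable
      (((Set.Icc (0 : ℝ) (x i)).indicator (fun _ => (1 : ℝ))) - f) μ := by
    intro i
    exact ((measurable_const.indicator measurableSet_Icc).aestronglyMeasurable).sub
      hfmem.aestronglyMeasurable
  have htri : eLpNorm
      ((Set.Icc (0 : ℝ) (x i0)).indicator (fun _ => (1 : ℝ)) -
        (Set.Icc (0 : ℝ) (x il)).indicator (fun _ => (1 : ℝ))) q μ
      ≤ ENNReal.ofReal r + ENNReal.ofReal r := by
    have heq : ((Set.Icc (0 : ℝ) (x i0)).indicator (fun _ => (1 : ℝ)) -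
        (Set.Icc (0 : ℝ) (x il)).indicator (fun _ => (1 : ℝ)))
        = ((Set.Icc (0 : ℝ) (x i0)).indicator (fun _ => (1 : ℝ)) - f) -
          ((Set.Icc (0 : ℝ) (x il)).indicator (fun _ => (1 : ℝ)) - f) := by
      funext t; simp [Pi.sub_apply]
    rw [heq]
    exact le_trans (eLpNorm_sub_le (hmeas i0) (hmeas il) hq1)
      (add_le_add (hf i0) (hf il))
  have hle : x il - x i0 ≤ (2 * r) ^ p := by
    have h0l : x i0 ≤ x il := (hmono.le_iff_le).mpr (by simp [i0, il, Fin.le_def])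
    rw [stmt19_norm p hp1 _ _ (hx0 i0) h0l] at htri
    have h2r : ENNReal.ofReal r + ENNReal.ofReal r = ENNReal.ofReal (2*r) := by
      rw [← ENNReal.ofReal_add hr.le hr.le]; ring_nf
    rw [h2r] at htri
    have h2 := ENNReal.rpow_le_rpow htri hp0.le
    rw [← ENNReal.rpow_mul, one_div_mul_cancel hp0.ne', ENNReal.rpow_one,
      ENNReal.ofReal_rpow_of_pos (by linarith)] at h2
    exact (ENNReal.ofReal_le_ofReal_iff (Real.rpow_nonneg (by linarith) p)).mp h2
  have hch := hchain (k-1) hil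
  have h2rp : (2*r) ^ p = 2 ^ p * r ^ p := Real.mul_rpow (by norm_num) hr.le
  have hrp : (0:ℝ) < r ^ p := Real.rpow_pos_of_pos hr p
  have hk1 : ((k:ℝ) - 1) * r ^ p ≤ 2 ^ p * r ^ p := by
    rw [show (k:ℝ) - 1 = ((k-1:ℕ):ℝ) by rw [Nat.cast_sub (by omega), Nat.cast_one]]
    calc ((k-1:ℕ):ℝ) * r ^ p ≤ x il - x i0 := hch
      _ ≤ (2*r)^p := hle
      _ = 2^p * r^p := h2rp
  have := (mul_le_mul_iff_of_pos_right hrp).mp hk1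
  linarith
end
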